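/- arXiv:1802.01705 — 3 statements merged into one kernel-verified Lean document; each statement's English description precedes it below -/
import Mathlib

section
/- Let λ = (λ₁, λ₂, …, λₙ) be a partition. Then the Schur function satisfies s_λ = B_{λ₁} B_{λ₂} ⋯ B_{λₙ} · 1, where B_k := Σ_{r≥0} (−1)^r h_{k+r} ∘ e_r^⊥ is the k-th Bernstein operator. -/
/-!
STATEMENT 0.  The ring `Λ_ℚ = ℚ[x₁,x₂,…]` of symmetric functions
(`x_i = p_i/i` the normalized power sums) is axiomatised as a structure
`SymF` on a commutative ℚ-algebra `A`:  homogeneous and elementary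
symmetric functions `h_k`, `e_k` are defined by their generating series
(encoded by the equivalent recurrences obtained by comparing coefficients
of `d/dz log`), `Dx k = ∂_{x_k}`, and `perp f = f^⊥` is the adjoint map
`x_k ↦ (1/k) ∂_{x_k}`.  The Schur function is given by the Jacobi–Trudi
determinant, and the Bernstein operator is
`B_k = ∑_{r≥0} (−1)^r h_{k+r} ∘ e_r^⊥` (the sum being locally finite,
it is rendered as a sum up to the truncation bound `bnd f`).
-/

open scoped BigOperators Classical

noncomputable section

/-- The ring of symmetric functions `ℚ[x₁,x₂,…]` in the normalized power
sums `x_k = p_k/k`, `k ≥ 1` (we set `x 0 = 0`). -/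
structure SymF (A : Type*) [CommRing A] [Algebra ℚ A] where
  x : ℕ → A
  x0 : x 0 = 0
  /-- `A` is free with basis the monomials in the `x_k`, `k ≥ 1` -/
  bas : Module.Basis (ℕ →₀ ℕ) ℚ A
  bas_eq : ∀ d : ℕ →₀ ℕ, bas d = d.prod fun k n => x (k+1) ^ n
  /-- `h_k`, defined by `∑ z^k h_k = exp (∑_{k>0} z^k x_k)` -/
  h : ℕ → A
  /-- `e_k`, defined by `∑ z^k e_k = exp (−∑_{k>0} (−z)^k x_k)` -/
  e : ℕ → A
  h_zero : h 0 = 1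
  h_rec : ∀ n : ℕ, ((n : ℚ) + 1) • h (n+1) =
    ∑ k ∈ Finset.range (n+1), ((k : ℚ) + 1) • (x (k+1) * h (n - k))
  e_zero : e 0 = 1
  e_rec : ∀ n : ℕ, ((n : ℚ) + 1) • e (n+1) =
    ∑ k ∈ Finset.range (n+1), (((-1 : ℚ))^k * ((k : ℚ) + 1)) • (x (k+1) * e (n - k))
  /-- the derivative `∂_{x_k}` -/
  Dx : ℕ → Module.End ℚ A
  Dx_leibniz : ∀ k a b, Dx k (a * b) = Dx k a * b + a * Dx k b
  Dx_x : ∀ k j, 1 ≤ k → Dx k (x j) = if j = k then 1 else 0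
  /-- the adjoint map `f ↦ f^⊥ = f(∂_{x₁}, ½∂_{x₂}, …)` with respect to the
  scalar product `⟨x_λ, x_μ⟩ = δ_{λμ} |Aut(λ)|/∏ᵢλᵢ` -/
  perp : A →ₗ[ℚ] Module.End ℚ A
  perp_one : perp 1 = 1
  perp_mul : ∀ a b, perp (a * b) = perp a * perp b
  perp_x : ∀ k, 1 ≤ k → perp (x k) = ((k : ℚ))⁻¹ • Dx k
  /-- truncation bound: `e_k^⊥ f = 0` for `k ≥ bnd f` -/
  bnd : A → ℕ
  bnd_eperp : ∀ f k, bnd f ≤ k → perp (e k) f = 0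

namespace SymF

variable {A : Type*} [CommRing A] [Algebra ℚ A] (S : SymF A)

/-- `h_n` for `n ∈ ℤ`, with `h_n = 0` for `n < 0` -/
def hZ (n : ℤ) : A := if 0 ≤ n then S.h n.toNat else 0

/-- `e_r^⊥` -/
def ePerp (r : ℕ) : A → A := fun f => S.perp (S.e r) f

/-- the `k`-th Bernstein operator `B_k = ∑_{r≥0} (−1)^r h_{k+r} ∘ e_r^⊥` -/
def B (k : ℤ) (f : A) : A :=
  ∑ r ∈ Finset.range (S.bnd f), ((-1 : ℚ))^r • (S.hZ (k + (r : ℤ)) * S.ePerp r f)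

/-- the Schur function `s_λ`, via the Jacobi–Trudi determinant
`s_λ = det (h_{λᵢ − i + j})` -/
def schur (l : List ℕ) : A :=
  Matrix.det (Matrix.of fun i j : Fin l.length => S.hZ ((l.get i : ℤ) - (i : ℕ) + (j : ℕ)))

end SymF



section Aux

lemma tri_sum {M : Type*} [AddCommMonoid M] (n : ℕ) (f : ℕ → ℕ → M) :
    ∑ k ∈ Finset.range (n+1), ∑ i ∈ Finset.range (n+1-k), f k i =
      ∑ m ∈ Finset.range (n+1), ∑ k ∈ Finset.range (m+1), f k (m-k) := by
  induction n with
  | zero => simp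
  | succ n ih =>
    rw [Finset.sum_range_succ (fun m => ∑ k ∈ Finset.range (m+1), f k (m-k)), ← ih]
    rw [Finset.sum_range_succ (fun k => ∑ i ∈ Finset.range (n+2-k), f k i)]
    have h1 : ∀ k ∈ Finset.range (n+1),
        ∑ i ∈ Finset.range (n+2-k), f k i
          = ∑ i ∈ Finset.range (n+1-k), f k i + f k (n+1-k) := by
      intro k hk
      have hk' : k ≤ n := Nat.lt_succ_iff.mp (Finset.mem_range.mp hk)
      have h2 : n+2-k = (n+1-k)+1 := by omega
      rw [h2, Finset.sum_range_succ]
    rw [Finset.sum_congr rfl h1, Finset.sum_add_distrib]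
    have h2 : n+2-(n+1) = 1 := by omega
    rw [h2, Finset.sum_range_one]
    rw [Finset.sum_range_succ (fun k => f k (n+1-k)) (n+1),
        Finset.sum_range_succ (fun k => f k (n+1-k)) n]
    have h3 : n+1-(n+1) = 0 := by omega
    rw [h3]
    abel

lemma tri_comm {M : Type*} [AddCommMonoid M] (N : ℕ) (f : ℕ → ℕ → M) :
    ∑ k ∈ Finset.range N, ∑ i ∈ Finset.range (N-k), f k i =
      ∑ i ∈ Finset.range N, ∑ k ∈ Finset.range (N-i), f k i := by
  have pad : ∀ (g : ℕ → ℕ → M) (k : ℕ),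
      ∑ i ∈ Finset.range (N-k), g k i
        = ∑ i ∈ Finset.range N, if k + i < N then g k i else 0 := by
    intro g k
    have e1 : ∑ i ∈ Finset.range (N-k), g k i
        = ∑ i ∈ Finset.range (N-k), (if k + i < N then g k i else 0) := by
      refine Finset.sum_congr rfl fun i hi => ?_
      rw [Finset.mem_range] at hi
      rw [if_pos (by omega)]
    rw [e1]
    refine Finset.sum_subset (Finset.range_subset_range.mpr (Nat.sub_le N k)) ?_
    intro i _ hi
    rw [Finset.mem_range, not_lt] at hi
    rw [if_neg (by omega)]
  calc ∑ k ∈ Finset.range N, ∑ i ∈ Finset.range (N-k), f k i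
      = ∑ k ∈ Finset.range N, ∑ i ∈ Finset.range N,
          (if k + i < N then f k i else 0) :=
        Finset.sum_congr rfl fun k _ => pad f k
    _ = ∑ i ∈ Finset.range N, ∑ k ∈ Finset.range N,
          (if k + i < N then f k i else 0) := Finset.sum_comm
    _ = ∑ i ∈ Finset.range N, ∑ k ∈ Finset.range (N-i), f k i := by
        refine Finset.sum_congr rfl fun i _ => ?_
        rw [pad (fun a b => f b a) i]
        refine Finset.sum_congr rfl fun k _ => ?_
        congr 1
        · simp [Nat.add_comm]

namespace SymF

variable {A : Type*} [CommRing A] [Algebra ℚ A] (S : SymF A)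

lemma Dx_one (k : ℕ) : S.Dx k 1 = 0 := by
  have h := S.Dx_leibniz k 1 1
  rw [mul_one, mul_one, one_mul] at h
  exact (left_eq_add.mp h)

lemma hZ_ofNat (m : ℕ) : S.hZ (m : ℤ) = S.h m := by
  simp [SymF.hZ]

lemma hZ_neg {t : ℤ} (ht : t < 0) : S.hZ t = 0 := by
  simp [SymF.hZ, not_le.mpr ht]

lemma hZ_zero : S.hZ 0 = 1 := by
  simpa using (S.hZ_ofNat 0).trans S.h_zero

/-- the recurrence for `e`, as an identity of applied perp operators -/
lemma perp_e_apply_rec (n : ℕ) (f : A) :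
    ((n : ℚ) + 1) • S.perp (S.e (n+1)) f =
      ∑ k ∈ Finset.range (n+1), ((-1:ℚ))^k • S.Dx (k+1) (S.perp (S.e (n-k)) f) := by
  have h := congrArg (fun g => S.perp g f) (S.e_rec n)
  simp only [map_smul, map_sum, LinearMap.smul_apply, LinearMap.sum_apply] at h
  rw [h]
  refine Finset.sum_congr rfl fun k _ => ?_
  have hk : ((k:ℚ) + 1) ≠ 0 := by positivity
  rw [S.perp_mul, S.perp_x (k+1) (Nat.le_add_left 1 k), smul_mul_assoc,
      LinearMap.smul_apply, Module.End.mul_apply, smul_smul]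
  congr 1
  push_cast
  rw [mul_assoc, mul_inv_cancel₀ hk, mul_one]

lemma Dx_h (k : ℕ) (hk : 1 ≤ k) : ∀ m : ℕ, S.Dx k (S.h m) = S.hZ ((m:ℤ) - k) := by
  intro m
  induction m using Nat.strong_induction_on with
  | _ m ih =>
    match m with
    | 0 =>
      rw [S.h_zero, S.Dx_one, S.hZ_neg]
      omega
    | (m+1) =>
      have key := congrArg (fun a => S.Dx k a) (S.h_rec m)
      simp only [map_smul, map_sum] at key
      have expand : ∀ j ∈ Finset.range (m+1),
          S.Dx k (S.x (j+1) * S.h (m-j))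
            = (if j+1 = k then (1:A) else 0) * S.h (m-j)
                + S.x (j+1) * S.hZ ((m:ℤ) - j - k) := by
        intro j hj
        rw [Finset.mem_range] at hj
        rw [S.Dx_leibniz, S.Dx_x k (j+1) hk, ih (m-j) (by omega)]
        rw [show ((m-j : ℕ) : ℤ) - (k:ℤ) = (m:ℤ) - j - k from by omega]
      have key2 : ((m:ℚ)+1) • S.Dx k (S.h (m+1)) =
          ∑ j ∈ Finset.range (m+1), ((j:ℚ)+1) •
            ((if j+1 = k then (1:A) else 0) * S.h (m-j)
              + S.x (j+1) * S.hZ ((m:ℤ) - j - k)) := by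
        rw [key]
        exact Finset.sum_congr rfl fun j hj => by rw [expand j hj]
      clear key
      simp only [smul_add, Finset.sum_add_distrib] at key2
      have first : ∑ j ∈ Finset.range (m+1),
          ((j:ℚ)+1) • ((if j+1 = k then (1:A) else 0) * S.h (m-j))
            = if k ≤ m+1 then (k:ℚ) • S.h (m+1-k) else 0 := by
        by_cases hkm : k ≤ m+1
        · rw [if_pos hkm]
          rw [Finset.sum_eq_single (k-1)]
          · rw [if_pos (by omega), one_mul]
            have c1 : ((k-1 : ℕ) : ℚ) + 1 = (k:ℚ) := by
              rw [Nat.cast_sub hk]; ring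
            have c2 : m - (k-1) = m+1-k := by omega
            rw [c1, c2]
          · intro j _ hne
            rw [if_neg (by omega), zero_mul, smul_zero]
          · intro hmem
            exact absurd (Finset.mem_range.mpr (by omega)) hmem
        · rw [if_neg hkm]
          apply Finset.sum_eq_zero
          intro j hj
          rw [Finset.mem_range] at hj
          rw [if_neg (by omega), zero_mul, smul_zero]
      rw [first] at key2
      have second : ∑ j ∈ Finset.range (m+1),
          ((j:ℚ)+1) • (S.x (j+1) * S.hZ ((m:ℤ) - j - k))
            = if k ≤ m then (((m-k : ℕ) : ℚ) + 1) • S.h (m-k+1) else 0 := by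
        by_cases hkm : k ≤ m
        · rw [if_pos hkm]
          have van : ∀ j ∈ Finset.range (m+1), j ∉ Finset.range (m-k+1) →
              ((j:ℚ)+1) • (S.x (j+1) * S.hZ ((m:ℤ) - j - k)) = 0 := by
            intro j hj hj2
            rw [Finset.mem_range] at hj
            rw [Finset.mem_range, not_lt] at hj2
            rw [S.hZ_neg (by omega), mul_zero, smul_zero]
          rw [← Finset.sum_subset (Finset.range_subset_range.mpr
                (by omega : m-k+1 ≤ m+1)) van]
          have conv : ∀ j ∈ Finset.range (m-k+1),
              ((j:ℚ)+1) • (S.x (j+1) * S.hZ ((m:ℤ) - j - k))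
                = ((j:ℚ)+1) • (S.x (j+1) * S.h (m-k-j)) := by
            intro j hj
            rw [Finset.mem_range] at hj
            rw [show (m:ℤ) - j - k = ((m-k-j : ℕ) : ℤ) from by omega, S.hZ_ofNat]
          rw [Finset.sum_congr rfl conv, ← S.h_rec (m-k)]
        · rw [if_neg hkm]
          apply Finset.sum_eq_zero
          intro j hj
          rw [Finset.mem_range] at hj
          rw [S.hZ_neg (by omega), mul_zero, smul_zero]
      rw [second] at key2
      have hm1 : ((m:ℚ)+1) ≠ 0 := by positivity
      by_cases hc1 : k ≤ m
      · rw [if_pos (by omega), if_pos hc1] at key2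
        rw [show ((m+1 : ℕ):ℤ) - (k:ℤ) = ((m-k+1 : ℕ) : ℤ) from by omega, S.hZ_ofNat]
        refine smul_right_injective A hm1 ?_
        beta_reduce
        rw [key2, show m+1-k = m-k+1 from by omega]
        rw [← add_smul]
        congr 1
        rw [Nat.cast_sub hc1]
        push_cast
        ring
      · by_cases hc2 : k = m+1
        · rw [if_pos (by omega), if_neg hc1, add_zero] at key2
          rw [show ((m+1 : ℕ):ℤ) - (k:ℤ) = ((0:ℕ) : ℤ) from by omega, S.hZ_ofNat]
          refine smul_right_injective A hm1 ?_
          beta_reduce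
          rw [key2, hc2, show m+1-(m+1) = 0 from Nat.sub_self _]
          congr 1
          push_cast
          ring
        · rw [if_neg (by omega), if_neg hc1, add_zero] at key2
          rw [S.hZ_neg (by push_cast; omega)]
          refine smul_right_injective A hm1 ?_
          beta_reduce
          rw [key2, smul_zero]

lemma Dx_hZ (k : ℕ) (hk : 1 ≤ k) (t : ℤ) : S.Dx k (S.hZ t) = S.hZ (t - k) := by
  by_cases ht : 0 ≤ t
  · obtain ⟨m, rfl⟩ := Int.eq_ofNat_of_zero_le ht
    rw [S.hZ_ofNat, S.Dx_h k hk m]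
  · rw [S.hZ_neg (by omega), map_zero, S.hZ_neg (by omega)]

lemma perp_e_zero_apply (f : A) : S.perp (S.e 0) f = f := by
  rw [S.e_zero, S.perp_one, Module.End.one_apply]

lemma perp_e_one (r : ℕ) (hr : 1 ≤ r) : S.perp (S.e r) (1 : A) = 0 := by
  induction r using Nat.strong_induction_on with
  | _ r ih =>
    match r with
    | 0 => omega
    | (n+1) =>
      have key := S.perp_e_apply_rec n 1
      have hz : ∀ k ∈ Finset.range (n+1),
          ((-1:ℚ))^k • S.Dx (k+1) (S.perp (S.e (n-k)) 1) = 0 := by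
        intro k hk
        rw [Finset.mem_range] at hk
        by_cases hkn : k = n
        · subst hkn
          rw [Nat.sub_self, S.perp_e_zero_apply, S.Dx_one, smul_zero]
        · rw [ih (n-k) (by omega) (by omega), map_zero, smul_zero]
      rw [Finset.sum_eq_zero hz] at key
      have hm1 : ((n:ℚ)+1) ≠ 0 := by positivity
      refine smul_right_injective A hm1 ?_
      beta_reduce
      rw [key, smul_zero]

lemma perp_e_hZ (r : ℕ) (hr : 1 ≤ r) (t : ℤ) :
    S.perp (S.e r) (S.hZ t) = if r = 1 then S.hZ (t-1) else 0 := by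
  induction r using Nat.strong_induction_on with
  | _ r ih =>
    match r with
    | 0 => omega
    | (n+1) =>
      have key := S.perp_e_apply_rec n (S.hZ t)
      have hm1 : ((n:ℚ)+1) ≠ 0 := by positivity
      match n with
      | 0 =>
        rw [if_pos rfl]
        refine smul_right_injective A hm1 ?_
        beta_reduce
        rw [key, Finset.sum_range_one, S.perp_e_zero_apply, S.Dx_hZ 1 le_rfl t]
        push_cast
        rw [pow_zero, one_smul, zero_add, one_smul]
      | (n+1) =>
        rw [if_neg (by omega)]
        refine smul_right_injective A hm1 ?_
        beta_reduce
        rw [key, smul_zero]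
        rw [Finset.sum_range_succ, Finset.sum_range_succ]
        have hz : ∀ k ∈ Finset.range n,
            ((-1:ℚ))^k • S.Dx (k+1) (S.perp (S.e (n+1-k)) (S.hZ t)) = 0 := by
          intro k hk
          rw [Finset.mem_range] at hk
          rw [ih (n+1-k) (by omega) (by omega), if_neg (by omega), map_zero,
            smul_zero]
        rw [Finset.sum_eq_zero hz, zero_add]
        rw [show n+1-n = 1 from by omega, ih 1 (by omega) le_rfl, if_pos rfl,
          Nat.sub_self, S.perp_e_zero_apply]
        rw [S.Dx_hZ (n+1) (by omega) (t-1), S.Dx_hZ (n+2) (by omega) t]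
        rw [show t - 1 - ((n+1 : ℕ) : ℤ) = t - ((n+2:ℕ) : ℤ) from by push_cast; ring]
        rw [← add_smul]
        rw [show ((-1:ℚ))^n + ((-1:ℚ))^(n+1) = 0 from by ring, zero_smul]

lemma perp_e_mul (n : ℕ) (a b : A) :
    S.perp (S.e n) (a * b) =
      ∑ k ∈ Finset.range (n+1),
        S.perp (S.e k) a * S.perp (S.e (n-k)) b := by
  induction n using Nat.strong_induction_on with
  | _ n ih =>
    match n with
    | 0 =>
      rw [Finset.sum_range_one, Nat.sub_self, S.perp_e_zero_apply,
        S.perp_e_zero_apply, S.perp_e_zero_apply]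
    | (n+1) =>
      have hm1 : ((n:ℚ)+1) ≠ 0 := by positivity
      refine smul_right_injective A hm1 ?_
      beta_reduce
      rw [S.perp_e_apply_rec n (a * b)]
      -- expand each term using the inductive hypothesis and Leibniz
      have step1 : ∀ k ∈ Finset.range (n+1),
          ((-1:ℚ))^k • S.Dx (k+1) (S.perp (S.e (n-k)) (a*b))
            = ∑ i ∈ Finset.range (n+1-k),
                (((-1:ℚ))^k • (S.Dx (k+1) (S.perp (S.e i) a) * S.perp (S.e (n-k-i)) b)
                  + ((-1:ℚ))^k • (S.perp (S.e i) a * S.Dx (k+1) (S.perp (S.e (n-k-i)) b))) := by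
        intro k hk
        rw [Finset.mem_range] at hk
        rw [ih (n-k) (by omega), map_sum, Finset.smul_sum,
          show n-k+1 = n+1-k from by omega]
        refine Finset.sum_congr rfl fun i _ => ?_
        rw [S.Dx_leibniz, smul_add]
      rw [Finset.sum_congr rfl step1]
      simp only [Finset.sum_add_distrib]
      -- first double sum, via diagonal reindexing
      have S1 : ∑ k ∈ Finset.range (n+1), ∑ i ∈ Finset.range (n+1-k),
            ((-1:ℚ))^k • (S.Dx (k+1) (S.perp (S.e i) a) * S.perp (S.e (n-k-i)) b)
          = ∑ m ∈ Finset.range (n+1),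
              (((m:ℚ)+1) • S.perp (S.e (m+1)) a) * S.perp (S.e (n-m)) b := by
        rw [tri_sum n (fun k i =>
          ((-1:ℚ))^k • (S.Dx (k+1) (S.perp (S.e i) a) * S.perp (S.e (n-k-i)) b))]
        refine Finset.sum_congr rfl fun m hm => ?_
        rw [Finset.mem_range] at hm
        rw [S.perp_e_apply_rec m a, Finset.sum_mul]
        refine Finset.sum_congr rfl fun k hk => ?_
        rw [Finset.mem_range] at hk
        rw [show n-k-(m-k) = n-m from by omega, smul_mul_assoc]
      -- second double sum, via swapping the triangle
      have S2 : ∑ k ∈ Finset.range (n+1), ∑ i ∈ Finset.range (n+1-k),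
            ((-1:ℚ))^k • (S.perp (S.e i) a * S.Dx (k+1) (S.perp (S.e (n-k-i)) b))
          = ∑ i ∈ Finset.range (n+1),
              S.perp (S.e i) a * (((n-i : ℕ):ℚ)+1) • S.perp (S.e (n-i+1)) b := by
        rw [tri_comm (n+1) (fun k i =>
          ((-1:ℚ))^k • (S.perp (S.e i) a * S.Dx (k+1) (S.perp (S.e (n-k-i)) b)))]
        refine Finset.sum_congr rfl fun i hi => ?_
        rw [Finset.mem_range] at hi
        rw [S.perp_e_apply_rec (n-i) b, Finset.mul_sum,
          show n-i+1 = n+1-i from by omega]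
        refine Finset.sum_congr rfl fun k hk => ?_
        rw [Finset.mem_range] at hk
        rw [show (n-i)-k = n-k-i from by omega, mul_smul_comm]
      rw [S1, S2]
      -- now expand the right-hand side
      rw [Finset.smul_sum]
      have split : ∀ m ∈ Finset.range (n+2),
          ((n:ℚ)+1) • (S.perp (S.e m) a * S.perp (S.e (n+1-m)) b)
            = ((m:ℚ) • S.perp (S.e m) a) * S.perp (S.e (n+1-m)) b
              + S.perp (S.e m) a * (((n+1-m : ℕ):ℚ) • S.perp (S.e (n+1-m)) b) := by
        intro m hm
        rw [Finset.mem_range] at hm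
        have hsplit : ((n:ℚ)+1) = (m:ℚ) + ((n+1-m : ℕ):ℚ) := by
          rw [Nat.cast_sub (by omega)]
          push_cast
          ring
        rw [hsplit, add_smul, smul_mul_assoc, mul_smul_comm]
      rw [Finset.sum_congr rfl split, Finset.sum_add_distrib]
      congr 1
      · -- U1 = S1
        rw [Finset.sum_range_succ' (fun m =>
          ((m:ℚ) • S.perp (S.e m) a) * S.perp (S.e (n+1-m)) b) (n+1)]
        rw [Nat.cast_zero, zero_smul, zero_mul, add_zero]
        refine Finset.sum_congr rfl fun m hm => ?_
        rw [Finset.mem_range] at hm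
        rw [show n+1-(m+1) = n-m from by omega]
        push_cast
        ring_nf
      · -- U2 = S2
        rw [Finset.sum_range_succ (fun m =>
          S.perp (S.e m) a * (((n+1-m : ℕ):ℚ) • S.perp (S.e (n+1-m)) b)) (n+1)]
        rw [Nat.sub_self, Nat.cast_zero, zero_smul, mul_zero, add_zero]
        refine Finset.sum_congr rfl fun m hm => ?_
        rw [Finset.mem_range] at hm
        rw [show n+1-m = (n-m)+1 from by omega]
        push_cast [Nat.cast_sub (by omega : m ≤ n)]
        ring_nf

lemma perp_e_hZ_mul (r : ℕ) (hr : 1 ≤ r) (t : ℤ) (f : A) :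
    S.perp (S.e r) (S.hZ t * f)
      = S.hZ t * S.perp (S.e r) f + S.hZ (t-1) * S.perp (S.e (r-1)) f := by
  obtain ⟨r', rfl⟩ : ∃ r', r = r'+1 := ⟨r-1, by omega⟩
  rw [S.perp_e_mul (r'+1) (S.hZ t) f]
  rw [Finset.sum_range_succ' (fun i => S.perp (S.e i) (S.hZ t) * S.perp (S.e (r'+1-i)) f) (r'+1)]
  rw [Finset.sum_range_succ' (fun i => S.perp (S.e (i+1)) (S.hZ t) * S.perp (S.e (r'+1-(i+1))) f) r']
  have hz : ∀ i ∈ Finset.range r',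
      S.perp (S.e (i+1+1)) (S.hZ t) * S.perp (S.e (r'+1-(i+1+1))) f = 0 := by
    intro i _
    rw [S.perp_e_hZ (i+2) (by omega) t, if_neg (by omega), zero_mul]
  rw [Finset.sum_eq_zero hz, zero_add]
  rw [S.perp_e_hZ 1 le_rfl t, if_pos rfl, S.perp_e_zero_apply]
  rw [show r'+1-(0+1) = (r'+1)-1 from by omega, show r'+1-0 = r'+1 from by omega]
  ring

lemma B_trunc (k : ℤ) (f : A) (N : ℕ) (hN : S.bnd f ≤ N) :
    S.B k f = ∑ r ∈ Finset.range N,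
      ((-1:ℚ))^r • (S.hZ (k + (r:ℤ)) * S.perp (S.e r) f) := by
  have hB : S.B k f = ∑ r ∈ Finset.range (S.bnd f),
      ((-1:ℚ))^r • (S.hZ (k + (r:ℤ)) * S.perp (S.e r) f) := rfl
  rw [hB]
  refine Finset.sum_subset (Finset.range_subset_range.mpr hN) ?_
  intro r _ hr
  rw [Finset.mem_range, not_lt] at hr
  rw [S.bnd_eperp f r hr, mul_zero, smul_zero]

lemma B_add (k : ℤ) (f g : A) : S.B k (f + g) = S.B k f + S.B k g := by
  set N := max (S.bnd (f+g)) (max (S.bnd f) (S.bnd g)) with hN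
  rw [S.B_trunc k (f+g) N (le_max_left _ _),
      S.B_trunc k f N (le_max_of_le_right (le_max_left _ _)),
      S.B_trunc k g N (le_max_of_le_right (le_max_right _ _)),
      ← Finset.sum_add_distrib]
  refine Finset.sum_congr rfl fun r _ => ?_
  rw [map_add, mul_add, smul_add]

lemma B_smul (k : ℤ) (q : ℚ) (f : A) : S.B k (q • f) = q • S.B k f := by
  set N := max (S.bnd (q • f)) (S.bnd f) with hN
  rw [S.B_trunc k (q•f) N (le_max_left _ _),
      S.B_trunc k f N (le_max_right _ _), Finset.smul_sum]
  refine Finset.sum_congr rfl fun r _ => ?_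
  rw [map_smul, mul_smul_comm, smul_comm]

lemma B_sum {ι : Type*} (k : ℤ) (s : Finset ι) (F : ι → A) :
    S.B k (∑ i ∈ s, F i) = ∑ i ∈ s, S.B k (F i) :=
  map_sum (AddMonoidHom.mk' (S.B k) (S.B_add k)) F s

lemma B_one (k : ℤ) : S.B k (1:A) = S.hZ k := by
  rw [S.B_trunc k 1 (max (S.bnd 1) 1) (le_max_left _ _)]
  rw [Finset.sum_eq_single 0]
  · rw [pow_zero, one_smul, S.perp_e_zero_apply, Nat.cast_zero, add_zero, mul_one]
  · intro r _ hr
    rw [S.perp_e_one r (by omega), mul_zero, smul_zero]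
  · intro hmem
    exact absurd (Finset.mem_range.mpr
      (lt_of_lt_of_le Nat.one_pos (le_max_right _ _))) hmem

lemma B_hZ_mul (k t : ℤ) (f : A) :
    S.B k (S.hZ t * f) = S.hZ t * S.B k f - S.hZ (t-1) * S.B (k+1) f := by
  set M := max (S.bnd (S.hZ t * f)) (S.bnd f) with hM
  have hf : S.bnd f ≤ M := le_max_right _ _
  rw [S.B_trunc k (S.hZ t * f) (M+1) (Nat.le_succ_of_le (le_max_left _ _)),
      S.B_trunc k f (M+1) (Nat.le_succ_of_le hf),
      S.B_trunc (k+1) f M hf]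
  rw [Finset.sum_range_succ' (fun r =>
    ((-1:ℚ))^r • (S.hZ (k + (r:ℤ)) * S.perp (S.e r) (S.hZ t * f))) M]
  rw [Finset.sum_range_succ' (fun r =>
    ((-1:ℚ))^r • (S.hZ (k + (r:ℤ)) * S.perp (S.e r) f)) M]
  have e0 : ((-1:ℚ))^0 • (S.hZ (k + ((0:ℕ):ℤ)) * S.perp (S.e 0) (S.hZ t * f))
      = S.hZ k * (S.hZ t * f) := by
    rw [pow_zero, one_smul, S.perp_e_zero_apply, Nat.cast_zero, add_zero]
  have e0' : ((-1:ℚ))^0 • (S.hZ (k + ((0:ℕ):ℤ)) * S.perp (S.e 0) f)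
      = S.hZ k * f := by
    rw [pow_zero, one_smul, S.perp_e_zero_apply, Nat.cast_zero, add_zero]
  rw [e0, e0']
  have es : ∀ s ∈ Finset.range M,
      ((-1:ℚ))^(s+1) • (S.hZ (k + ((s+1:ℕ):ℤ)) * S.perp (S.e (s+1)) (S.hZ t * f))
        = S.hZ t * (((-1:ℚ))^(s+1) • (S.hZ (k + ((s+1:ℕ):ℤ)) * S.perp (S.e (s+1)) f))
          - S.hZ (t-1) * (((-1:ℚ))^s • (S.hZ ((k+1) + (s:ℤ)) * S.perp (S.e s) f)) := by
    intro s _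
    rw [S.perp_e_hZ_mul (s+1) (by omega) t f, Nat.add_sub_cancel,
      show k + ((s+1:ℕ):ℤ) = (k+1) + (s:ℤ) from by push_cast; ring]
    simp only [Algebra.smul_def, map_pow, map_neg, map_one, map_mul]
    ring
  rw [Finset.sum_congr rfl es, Finset.sum_sub_distrib, mul_add,
    ← Finset.mul_sum, ← Finset.mul_sum, mul_left_comm (S.hZ t) (S.hZ k) f]
  abel

/-- determinant `det (hZ (b i + j))` -/
def Dt (n : ℕ) (b : Fin n → ℤ) : A :=
  (Matrix.of fun i j : Fin n => S.hZ (b i + ((j:ℕ) : ℤ))).det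

lemma Dt_zero (b : Fin 0 → ℤ) : S.Dt 0 b = 1 := Matrix.det_fin_zero

lemma sgn_smul (m : ℕ) (x : A) : (-1:A)^m * x = ((-1:ℚ))^m • x := by
  rw [Algebra.smul_def, map_pow, map_neg, map_one]

lemma Dt_expand (n : ℕ) (b : Fin (n+1) → ℤ) :
    S.Dt (n+1) b = ∑ i : Fin (n+1), ((-1:ℚ))^(i:ℕ) •
      (S.hZ (b i) * S.Dt n (fun i' => b (i.succAbove i') + 1)) := by
  rw [Dt, Matrix.det_succ_column_zero]
  refine Finset.sum_congr rfl fun i _ => ?_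
  have hminor : ((Matrix.of fun i j : Fin (n+1) => S.hZ (b i + ((j:ℕ) : ℤ))).submatrix
      i.succAbove Fin.succ) = Matrix.of (fun i' j' : Fin n =>
        S.hZ ((b (i.succAbove i') + 1) + ((j':ℕ) : ℤ))) := by
    ext i' j'
    simp only [Matrix.submatrix_apply, Matrix.of_apply, Fin.val_succ]
    congr 1
    push_cast
    ring
  rw [hminor, mul_assoc, sgn_smul]
  congr 3
  simp

lemma key_identity (n : ℕ) (b : Fin (n+1) → ℤ) (k : ℤ) :
    ∑ i : Fin (n+1), ((-1:ℚ))^(i:ℕ) •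
        (S.hZ (b i) * S.Dt (n+1) (Fin.cons k (fun j => b (i.succAbove j))))
      = S.hZ k * S.Dt (n+1) b := by
  set v : Fin (n+2) → ℤ := Fin.cons k b with hv
  set c : Fin (n+2) → ℤ := Fin.cons 0 (fun j : Fin (n+1) => ((j:ℕ) : ℤ)) with hc
  set W : Matrix (Fin (n+2)) (Fin (n+2)) A :=
    Matrix.of (fun i j => S.hZ (v i + c j)) with hW
  have hc0 : c 0 = 0 := by rw [hc]; exact Fin.cons_zero _ _
  have hc1 : c 1 = 0 := by
    have h01 : (1 : Fin (n+2)) = Fin.succ 0 := by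
      apply Fin.ext; simp
    rw [hc, h01, Fin.cons_succ]
    simp
  have hcs : ∀ j' : Fin (n+1), c (Fin.succ j') = ((j':ℕ) : ℤ) := by
    intro j'
    rw [hc, Fin.cons_succ]
  have hv0 : v 0 = k := by rw [hv]; exact Fin.cons_zero _ _
  have hvs : ∀ i : Fin (n+1), v (Fin.succ i) = b i := by
    intro i
    rw [hv, Fin.cons_succ]
  have hdet : W.det = 0 := by
    rw [← Matrix.det_transpose]
    refine Matrix.det_zero_of_row_eq (i := 0) (j := 1)
      (Fin.ne_of_val_ne (by norm_num)) ?_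
    funext x
    show S.hZ (v x + c 0) = S.hZ (v x + c 1)
    rw [hc0, hc1]
  have hexp := Matrix.det_succ_column_zero W
  rw [hdet] at hexp
  have minor_eq : ∀ i : Fin (n+2), (W.submatrix i.succAbove Fin.succ).det
      = S.Dt (n+1) (fun i' => v (i.succAbove i')) := by
    intro i
    have hm : W.submatrix i.succAbove Fin.succ
        = Matrix.of (fun i' j' : Fin (n+1) =>
            S.hZ (v (i.succAbove i') + ((j':ℕ) : ℤ))) := by
      ext i' j'
      show S.hZ (v (i.succAbove i') + c (Fin.succ j')) = _
      rw [hcs j']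
      rfl
    rw [hm]
    rfl
  have hexp2 : (0:A) = ∑ i : Fin (n+2),
      (-1:A)^(i:ℕ) * S.hZ (v i) * S.Dt (n+1) (fun i' => v (i.succAbove i')) := by
    rw [hexp]
    refine Finset.sum_congr rfl fun i _ => ?_
    rw [minor_eq i]
    have : W i 0 = S.hZ (v i) := by
      show S.hZ (v i + c 0) = S.hZ (v i)
      rw [hc0, add_zero]
    rw [this]
  rw [Fin.sum_univ_succ] at hexp2
  have term0 : (-1:A)^((0 : Fin (n+2)):ℕ) * S.hZ (v 0)
      * S.Dt (n+1) (fun i' => v ((0 : Fin (n+2)).succAbove i'))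
      = S.hZ k * S.Dt (n+1) b := by
    have hrows : (fun i' => v ((0 : Fin (n+2)).succAbove i')) = b := by
      funext i'
      rw [Fin.succAbove_zero, hvs]
    rw [hrows, hv0]
    norm_num
  rw [term0] at hexp2
  have terms : ∀ i : Fin (n+1),
      (-1:A)^((Fin.succ i : Fin (n+2)):ℕ) * S.hZ (v i.succ)
          * S.Dt (n+1) (fun i' => v ((Fin.succ i).succAbove i'))
        = -(((-1:ℚ))^(i:ℕ) •
            (S.hZ (b i) * S.Dt (n+1) (Fin.cons k (fun j => b (i.succAbove j))))) := by
    intro i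
    have hrows : (fun i' => v ((Fin.succ i).succAbove i'))
        = Fin.cons k (fun j => b (i.succAbove j)) := by
      funext j
      refine Fin.cases ?_ ?_ j
      · rw [Fin.succ_succAbove_zero, hv0]
        simp
      · intro j'
        rw [Fin.succ_succAbove_succ, hvs, Fin.cons_succ]
    rw [hvs i, hrows, Fin.val_succ, pow_succ, mul_comm ((-1:A)^(i:ℕ)) (-1:A),
      mul_assoc, mul_assoc, sgn_smul, neg_one_mul]
  rw [Finset.sum_congr rfl (fun i _ => terms i), Finset.sum_neg_distrib,
    ← sub_eq_add_neg] at hexp2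
  exact (sub_eq_zero.mp hexp2.symm).symm

lemma Dt_one (c : Fin 1 → ℤ) : S.Dt 1 c = S.hZ (c 0) := by
  rw [Dt, Matrix.det_fin_one, Matrix.of_apply]
  norm_num

lemma B_Dt : ∀ (n : ℕ) (b : Fin n → ℤ) (k : ℤ),
    S.B k (S.Dt n b) = S.Dt (n+1) (Fin.cons k (fun i => b i - 1)) := by
  intro n
  induction n with
  | zero =>
    intro b k
    rw [S.Dt_zero b, S.B_one k, S.Dt_one]
    rw [Fin.cons_zero]
  | succ n ih =>
    intro b k
    rw [S.Dt_expand n b, S.B_sum]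
    have step : ∀ i : Fin (n+1),
        S.B k (((-1:ℚ))^(i:ℕ) •
            (S.hZ (b i) * S.Dt n (fun i' => b (i.succAbove i') + 1)))
          = ((-1:ℚ))^(i:ℕ) •
              (S.hZ (b i) * S.Dt (n+1) (Fin.cons k (fun j => b (i.succAbove j)))
                - S.hZ (b i - 1) * S.Dt (n+1) (Fin.cons (k+1) (fun j => b (i.succAbove j)))) := by
      intro i
      have hfun : (fun i' => b (i.succAbove i') + 1 - 1) = (fun j => b (i.succAbove j)) := by
        funext j
        ring
      rw [S.B_smul, S.B_hZ_mul, ih (fun i' => b (i.succAbove i') + 1) k,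
          ih (fun i' => b (i.succAbove i') + 1) (k+1), hfun]
    rw [Finset.sum_congr rfl (fun i _ => step i)]
    simp only [smul_sub]
    rw [Finset.sum_sub_distrib, S.key_identity n b k]
    set b' : Fin (n+2) → ℤ := Fin.cons k (fun i => b i - 1) with hb'
    have hb'0 : b' 0 = k := by rw [hb']; exact Fin.cons_zero _ _
    have hb's : ∀ i : Fin (n+1), b' i.succ = b i - 1 := by
      intro i
      rw [hb', Fin.cons_succ]
    rw [S.Dt_expand (n+1) b',
      Fin.sum_univ_succ (fun i : Fin (n+2) => ((-1:ℚ))^(i:ℕ) •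
        (S.hZ (b' i) * S.Dt (n+1) fun i' => b' (i.succAbove i') + 1))]
    have t0 : ((-1:ℚ))^(((0:Fin (n+2))):ℕ) • (S.hZ (b' 0)
        * S.Dt (n+1) (fun i' => b' ((0:Fin (n+2)).succAbove i') + 1))
        = S.hZ k * S.Dt (n+1) b := by
      have hr : (fun i' => b' ((0:Fin (n+2)).succAbove i') + 1) = b := by
        funext i'
        rw [Fin.succAbove_zero, hb's]
        ring
      rw [hr, hb'0]
      simp
    rw [t0]
    have ts : ∀ i : Fin (n+1),
        ((-1:ℚ))^((Fin.succ i : Fin (n+2)):ℕ) •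
            (S.hZ (b' i.succ)
              * S.Dt (n+1) (fun j => b' ((Fin.succ i).succAbove j) + 1))
          = -(((-1:ℚ))^(i:ℕ) • (S.hZ (b i - 1)
              * S.Dt (n+1) (Fin.cons (k+1) (fun j => b (i.succAbove j))))) := by
      intro i
      have hr : (fun j => b' ((Fin.succ i).succAbove j) + 1)
          = Fin.cons (k+1) (fun j => b (i.succAbove j)) := by
        funext j
        refine Fin.cases ?_ ?_ j
        · rw [Fin.succ_succAbove_zero, hb'0]
          simp
        · intro j'
          rw [Fin.succ_succAbove_succ, hb's, Fin.cons_succ]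
          ring
      rw [hr, hb's, Fin.val_succ, pow_succ,
        mul_comm ((-1:ℚ)^(i:ℕ)) (-1:ℚ), neg_one_mul, neg_smul]
    rw [Finset.sum_congr rfl (fun i _ => ts i), Finset.sum_neg_distrib,
      ← sub_eq_add_neg]

end SymF

end Aux

/-- For a partition `λ = (λ₁, λ₂, …, λₙ)`,
`s_λ = B_{λ₁} B_{λ₂} ⋯ B_{λₙ} · 1`. -/
theorem schur_eq_bernstein_string {A : Type*} [CommRing A] [Algebra ℚ A]
    (S : SymF A) (l : List ℕ) (hl : l.Chain' (· ≥ ·)) (hpos : ∀ p ∈ l, 0 < p) :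
    S.schur l = l.foldr (fun k acc => S.B (k : ℤ) acc) 1 := by
  have main : ∀ l : List ℕ,
      (l.foldr (fun k acc => S.B (k:ℤ) acc) 1)
        = S.Dt l.length (fun i => (l.get i : ℤ) - ((i:ℕ):ℤ)) := by
    intro l
    induction l with
    | nil =>
      simp only [List.bind_eq_flatMap, List.flatMap_nil, List.foldr_nil]
      exact (S.Dt_zero _).symm
    | cons a l ihl =>
      simp only [List.bind_eq_flatMap, List.flatMap_cons, List.pure_def,
        List.singleton_append, List.foldr_cons] at ihl ⊢
      rw [ihl, S.B_Dt]
      show S.Dt (l.length+1) _ = S.Dt (l.length+1)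
        (fun i : Fin (l.length+1) => (((a::l).get i : ℕ) : ℤ) - ((i:ℕ):ℤ))
      congr 1
      funext i
      refine Fin.cases ?_ ?_ i
      · simp
      · intro j
        rw [Fin.cons_succ]
        have hg : (a::l).get j.succ = l.get j := rfl
        rw [hg, Fin.val_succ]
        push_cast
        ring
  rw [main l]
  rfl
end
end

section
/- For every n ∈ ℤ, the odd type-I* Bernstein operator satisfies the operator identity C_n^{(1)} = ∂_{ẽ₀}^⊥ ∘ C_n^{(0)} = Σ_{r,s,t≥0} (−1)^r h_{n+r−t} ∘ θ_{s+t+1} ∘ h_s^⊥ ∘ e_r^⊥ on the ring of symmetric functions in superspace (with h_j = 0 for j < 0). -/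
/-!
Common setup: the ring of symmetric functions in superspace
`𝒜 = ℚ[x₁,x₂,…] ⊗ ⋀[θ₁,θ₂,…]`, axiomatised as a structure `SSF` on a
ℚ-algebra `A`, together with superpartitions and the various derived
operators (Bernstein operators in superspace of the four types, etc.).

Conventions:
* `x k`, `θ k` are the (normalized) power sums; they are meaningful for
  `k ≥ 1` and we set `x 0 = θ 0 = 0`.
* All "locally finite" infinite sums of operators `∑_{r ≥ 0}` are rendered
  as finite sums `∑ r ∈ Finset.range (bnd f)` where `bnd f` is a bound
  beyond which all relevant operators annihilate `f`.
-/

open scoped BigOperators Classical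

noncomputable section

/-- A superpartition `Λ = (Λᵃ; Λˢ)`: `Λᵃ` is a strictly decreasing list of
nonnegative integers (the fermionic parts) and `Λˢ` is a weakly decreasing
list of positive integers (the bosonic parts). -/
structure SuperPartition where
  a : List ℕ
  s : List ℕ
  ha : a.Chain' (· > ·)
  hs : s.Chain' (· ≥ ·)
  hs0 : ∀ p ∈ s, 0 < p

namespace SuperPartition

/-- the fermionic degree `m(Λ)` -/
def fdeg (Λ : SuperPartition) : ℕ := Λ.a.length

/-- the number of parts `N` -/
def len (Λ : SuperPartition) : ℕ := Λ.a.length + Λ.s.length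

/-- the total degree `|Λ|` -/
def deg (Λ : SuperPartition) : ℕ := Λ.a.sum + Λ.s.sum

/-- `Λ*`: the weakly decreasing rearrangement of all the parts -/
def star (Λ : SuperPartition) : List ℕ :=
  (Multiset.sort ((Λ.a ++ Λ.s : List ℕ) : Multiset ℕ) (· ≤ ·)).reverse

/-- `Λ⊛`: the weakly decreasing rearrangement of the parts of `Λˢ`
together with the parts of `Λᵃ` each increased by one -/
def circ (Λ : SuperPartition) : List ℕ :=
  (Multiset.sort ((Λ.a.map (· + 1) ++ Λ.s : List ℕ) : Multiset ℕ) (· ≤ ·)).reverse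

/-- `Λᵢ*` (0-indexed; equal to `0` beyond the length) -/
def starPart (Λ : SuperPartition) (i : ℕ) : ℕ := Λ.star.getD i 0

/-- `Λᵢ⊛` (0-indexed; equal to `0` beyond the length) -/
def circPart (Λ : SuperPartition) (i : ℕ) : ℕ := Λ.circ.getD i 0

/-- `εᵢ(Λ) = Λᵢ⊛ − Λᵢ*` (0-indexed) -/
def eps (Λ : SuperPartition) (i : ℕ) : ℕ := Λ.circPart i - Λ.starPart i

/-- the (0-indexed) rows of the diagram of `Λ` that end with a circle,
listed from top to bottom -/
def circleRows (Λ : SuperPartition) : List ℕ :=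
  (List.range Λ.len).filter (fun i => decide (Λ.circPart i = Λ.starPart i + 1))

end SuperPartition

/-- the `i`-th part (0-indexed) of the conjugate of the partition `L` -/
def conjPart (L : List ℕ) (i : ℕ) : ℕ := (L.filter (fun p => decide (i < p))).length

/-- `Λc` is the conjugate `Λ'` of the superpartition `Λ` (the diagram of
`Λc` is the transpose of the diagram of `Λ`, i.e. both `Λ*` and `Λ⊛` get
conjugated). -/
def SuperPartition.IsConj (Λ Λc : SuperPartition) : Prop :=
  (∀ i, Λc.starPart i = conjPart Λ.star i) ∧ (∀ i, Λc.circPart i = conjPart Λ.circ i)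

/-- The ring `𝒜 = ℚ[x₁,x₂,…] ⊗ ⋀[θ₁,θ₂,…]` of symmetric functions in
superspace, together with its standard structure:  power sums `x`, `θ`,
the elementary and homogeneous bases `e`, `ẽ`, `h`, `h̃` (defined through
their generating series, here encoded by the equivalent recurrences
obtained by comparing coefficients), the derivatives `∂_{x_k}`, `∂_{θ_k}`,
`∂_{ẽ_m}`, the adjoint (`⊥`) map, the scalar product, the automorphisms
`ω` and `ρ` (and the adjoints `ρ^⊥`, `φ^⊥` of `ρ` and `φ = ω ∘ ρ`), and
the four families of Schur functions in superspace. -/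
structure SSF (A : Type*) [Ring A] [Algebra ℚ A] where
  /-- the even power sums `x_k = p_k/k` (for `k ≥ 1`) -/
  x : ℕ → A
  /-- the odd power sums `θ_k` (for `k ≥ 1`) -/
  θ : ℕ → A
  x0 : x 0 = 0
  θ0 : θ 0 = 0
  x_central : ∀ k a, x k * a = a * x k
  θ_anticomm : ∀ j k, θ j * θ k = - (θ k * θ j)
  /-- `A` is free over `ℚ` with basis the supermonomials in the `x`'s and `θ`'s -/
  bas : Module.Basis ((ℕ →₀ ℕ) × Finset ℕ) ℚ A
  bas_eq : ∀ (d : ℕ →₀ ℕ) (T : Finset ℕ), bas (d, T) =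
    ((d.support.sort (· ≤ ·)).map (fun k => x (k+1) ^ d k)).prod *
      ((T.sort (· ≤ ·)).map (fun k => θ (k+1))).prod
  /-- the complete homogeneous functions `h_k`, defined by
  `∑ z^k h_k = exp (∑_{k>0} z^k x_k)` -/
  h : ℕ → A
  /-- the elementary functions `e_k`, defined by
  `∑ z^k e_k = exp (−∑_{k>0} (−z)^k x_k)` -/
  e : ℕ → A
  /-- the odd complete homogeneous functions `h̃_k` -/
  ht : ℕ → A
  /-- the odd elementary functions `ẽ_k` -/
  et : ℕ → A
  h_zero : h 0 = 1
  h_rec : ∀ n : ℕ, ((n : ℚ) + 1) • h (n+1) =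
    ∑ k ∈ Finset.range (n+1), ((k : ℚ) + 1) • (x (k+1) * h (n - k))
  e_zero : e 0 = 1
  e_rec : ∀ n : ℕ, ((n : ℚ) + 1) • e (n+1) =
    ∑ k ∈ Finset.range (n+1), (((-1 : ℚ))^k * ((k : ℚ) + 1)) • (x (k+1) * e (n - k))
  ht_eq : ∀ n : ℕ, ht n = ∑ j ∈ Finset.range (n+1), θ (j+1) * h (n - j)
  et_eq : ∀ n : ℕ, et n = ∑ j ∈ Finset.range (n+1), ((-1 : ℚ))^j • (θ (j+1) * e (n - j))
  /-- the parity (grading) involution, `σ(x_k) = x_k`, `σ(θ_k) = −θ_k` -/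
  σ : A →ₐ[ℚ] A
  σ_x : ∀ k, σ (x k) = x k
  σ_θ : ∀ k, σ (θ k) = - θ k
  /-- the derivative `∂_{x_k}` -/
  Dx : ℕ → Module.End ℚ A
  /-- the (odd) derivative `∂_{θ_k}` -/
  Dθ : ℕ → Module.End ℚ A
  Dx_leibniz : ∀ k a b, Dx k (a * b) = Dx k a * b + a * Dx k b
  Dθ_leibniz : ∀ k a b, Dθ k (a * b) = Dθ k a * b + σ a * Dθ k b
  Dx_x : ∀ k j, 1 ≤ k → Dx k (x j) = if j = k then 1 else 0
  Dx_θ : ∀ k j, Dx k (θ j) = 0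
  Dθ_x : ∀ k j, Dθ k (x j) = 0
  Dθ_θ : ∀ k j, 1 ≤ k → Dθ k (θ j) = if j = k then 1 else 0
  /-- the (odd) derivative `∂_{ẽ_m}` with respect to `ẽ_m` in the free
  presentation `𝒜 = ℚ[e₁,e₂,…] ⊗ ⋀[ẽ₀,ẽ₁,…]` -/
  De : ℕ → Module.End ℚ A
  De_leibniz : ∀ m a b, De m (a * b) = De m a * b + σ a * De m b
  De_e : ∀ m n, De m (e n) = 0
  De_et : ∀ m n, De m (et n) = if n = m then 1 else 0
  /-- the adjoint map `f ↦ f^⊥`, given by the substitutions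
  `x_k ↦ (1/k) ∂_{x_k}` and `θ_k ↦ ∂_{θ_k}` (it is linear and reverses
  products) -/
  perp : A →ₗ[ℚ] Module.End ℚ A
  perp_one : perp 1 = 1
  perp_mul : ∀ a b, perp (a * b) = perp b * perp a
  perp_x : ∀ k, 1 ≤ k → perp (x k) = ((k : ℚ))⁻¹ • Dx k
  perp_θ : ∀ k, 1 ≤ k → perp (θ k) = Dθ k
  /-- the scalar product `⟨·,·⟩` on `𝒜`; on the power-sum basis it is
  `⟨𝒳_Λ, 𝒳_Ω⟩ = δ_{ΛΩ} (−1)^{m(m−1)/2} |Aut(Λˢ)| / ∏ᵢ Λˢᵢ`, which on the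
  (increasingly sorted) supermonomial basis takes the diagonal form below -/
  ip : A →ₗ[ℚ] A →ₗ[ℚ] ℚ
  ip_bas : ∀ (d : ℕ →₀ ℕ) (T : Finset ℕ) (d' : ℕ →₀ ℕ) (T' : Finset ℕ),
    ip (bas (d, T)) (bas (d', T')) =
      if d = d' ∧ T = T' then d.prod (fun k n => (Nat.factorial n : ℚ) / ((k : ℚ) + 1)^n)
      else 0
  /-- `⟨f·a, b⟩ = ⟨a, f^⊥ b⟩` : `perp f` is the adjoint of multiplication by `f` -/
  perp_adj : ∀ f a b, ip (f * a) b = ip a (perp f b)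
  /-- a uniform truncation bound: beyond `bnd f`, the annihilation operators
  kill `f` -/
  bnd : A → ℕ
  bnd_Dθ : ∀ f k, bnd f ≤ k → Dθ k f = 0
  bnd_Dx : ∀ f k, bnd f ≤ k → Dx k f = 0
  bnd_eperp : ∀ f k, bnd f ≤ k → perp (e k) f = 0
  bnd_hperp : ∀ f k, bnd f ≤ k → perp (h k) f = 0
  bnd_etperp : ∀ f k, bnd f ≤ k → perp (et k) f = 0
  bnd_htperp : ∀ f k, bnd f ≤ k → perp (ht k) f = 0
  /-- the automorphism `ω` -/
  ω : A →ₐ[ℚ] A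
  ω_x : ∀ n, 1 ≤ n → ω (x n) = ((-1 : ℚ))^(n-1) • x n
  ω_θ : ∀ n, 1 ≤ n → ω (θ n) = ((-1 : ℚ))^(n-1) • θ n
  ω_invol : ∀ a, ω (ω a) = a
  /-- the automorphism `ρ` -/
  ρ : A →ₐ[ℚ] A
  ρ_x : ∀ n, 1 ≤ n → ρ (x n) = ((-1 : ℚ))^(n-1) • x n
  ρ_θ : ∀ n, 1 ≤ n → ρ (θ n) = et (n-1)
  ρ_invol : ∀ a, ρ (ρ a) = a
  /-- `ρ^⊥`, the adjoint of `ρ` with respect to the scalar product -/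
  ρperp : A →ₗ[ℚ] A
  ρperp_adj : ∀ a b, ip (ρ a) b = ip a (ρperp b)
  /-- `φ^⊥`, the adjoint of `φ = ω ∘ ρ` with respect to the scalar product -/
  φperp : A →ₗ[ℚ] A
  φperp_adj : ∀ a b, ip (ω (ρ a)) b = ip a (φperp b)
  /-- `(φ^⊥)⁻¹`, the inverse of `φ^⊥` -/
  φperpInv : A →ₗ[ℚ] A
  φperpInv_left : ∀ a, φperpInv (φperp a) = a
  φperpInv_right : ∀ a, φperp (φperpInv a) = a
  /-- the type I Schur functions in superspace `s_Λ = P_Λ(q=0, t=0)` -/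
  sI : SuperPartition → A
  /-- the type I* Schur functions in superspace `s*_Λ` (dual basis of the `s_Λ`) -/
  sIstar : SuperPartition → A
  /-- the type II Schur functions in superspace `s̄_Λ = P_Λ(q=∞, t=∞)` -/
  sII : SuperPartition → A
  /-- the type II* Schur functions in superspace `s̄*_Λ` (dual basis of the `s̄_Λ`) -/
  sIIstar : SuperPartition → A
  sI_dual : ∀ Λ Ω, ip (sI Λ) (sIstar Ω) = if Λ = Ω then 1 else 0
  sII_dual : ∀ Λ Ω, ip (sII Λ) (sIIstar Ω) = if Λ = Ω then 1 else 0

/-- the modes of `exp (∑_{n>0} w^n a_n)` where `n • a_n = T n`: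
`expModes T s` is the coefficient of `w^s`. -/
noncomputable def expModes {A : Type*} [Ring A] [Algebra ℚ A] (T : ℕ → A → A) : ℕ → A → A
  | 0 => fun f => f
  | n + 1 => fun f =>
      ((n : ℚ) + 1)⁻¹ • ∑ k ∈ Finset.range (n + 1), T (k + 1) (expModes T (n - k) f)
decreasing_by exact Nat.lt_succ_of_le (Nat.sub_le n k)

namespace SSF

variable {A : Type*} [Ring A] [Algebra ℚ A] (S : SSF A)

/-- `h_n` for `n ∈ ℤ` (with `h_n = 0` for `n < 0`) -/
def hZ (n : ℤ) : A := if 0 ≤ n then S.h n.toNat else 0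

/-- `e_n` for `n ∈ ℤ` (with `e_n = 0` for `n < 0`) -/
def eZ (n : ℤ) : A := if 0 ≤ n then S.e n.toNat else 0

/-- `h̃_n` for `n ∈ ℤ` (with `h̃_n = 0` for `n < 0`) -/
def htZ (n : ℤ) : A := if 0 ≤ n then S.ht n.toNat else 0

/-- `ẽ_n` for `n ∈ ℤ` (with `ẽ_n = 0` for `n < 0`) -/
def etZ (n : ℤ) : A := if 0 ≤ n then S.et n.toNat else 0

/-- `θ_n` for `n ∈ ℤ` (with `θ_n = 0` for `n ≤ 0`) -/
def θZ (n : ℤ) : A := if 1 ≤ n then S.θ n.toNat else 0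

/-- `e_r^⊥` -/
def ePerp (r : ℕ) : A → A := fun f => S.perp (S.e r) f

/-- `h_r^⊥` -/
def hPerp (r : ℕ) : A → A := fun f => S.perp (S.h r) f

/-- `ẽ_r^⊥` -/
def etPerp (r : ℕ) : A → A := fun f => S.perp (S.et r) f

/-- `∂_{ẽ_m} = (−1)^m ∑_{s≥0} h_s ∂_{θ_{m+s+1}}` (explicit locally finite form) -/
def de (m : ℕ) (f : A) : A :=
  ((-1 : ℚ))^m • ∑ s ∈ Finset.range (S.bnd f), S.h s * S.Dθ (m+s+1) f

/-- `∂_{ẽ_m}^⊥ = (−1)^m ∑_{s≥0} θ_{m+s+1} ∘ h_s^⊥` -/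
def deperp (m : ℕ) (f : A) : A :=
  ((-1 : ℚ))^m • ∑ s ∈ Finset.range (S.bnd f), S.θ (m+s+1) * S.perp (S.h s) f

/-- `β_n = ∑_{r>0} θ_{r+n} ∂_{θ_r}` (for `n > 0`) -/
def βp (n : ℕ) (f : A) : A :=
  ∑ r ∈ Finset.range (S.bnd f), S.θ (r+1+n) * S.Dθ (r+1) f

/-- `β_{−n} = ∑_{r>0} θ_r ∂_{θ_{r+n}}` (for `n > 0`) -/
def βm (n : ℕ) (f : A) : A :=
  ∑ r ∈ Finset.range (S.bnd f), S.θ (r+1) * S.Dθ (r+1+n) f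

/-- the modes of `V₊(z) = exp(−∑_{n>0} (zⁿ/n) β_n)`:  `Vp s` is the
coefficient of `z^s` -/
def Vp : ℕ → A → A := expModes (fun k f => - S.βp k f)

/-- the modes of `V₊(z)⁻¹` -/
def VpInv : ℕ → A → A := expModes (fun k f => S.βp k f)

/-- the modes of `V₋(z) = exp(−∑_{n>0} (z⁻ⁿ/(−n)) β_{−n})`:  `Vm s` is the
coefficient of `z^{−s}` -/
def Vm : ℕ → A → A := expModes (fun k f => S.βm k f)

/-- the modes of `V₋(z)⁻¹` -/
def VmInv : ℕ → A → A := expModes (fun k f => - S.βm k f)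

/-- the odd type I Bernstein operator in superspace
`B_n^{(1)} = ∑_{r≥0} (−1)^r θ_{n+r+1} ∘ e_r^⊥` -/
def B1 (n : ℤ) (f : A) : A :=
  ∑ r ∈ Finset.range (S.bnd f), ((-1 : ℚ))^r • (S.θZ (n + (r : ℤ) + 1) * S.ePerp r f)

/-- the even type I Bernstein operator in superspace `B_n^{(0)} = ∂_{ẽ₀} ∘ B_n^{(1)}` -/
def B0 (n : ℤ) (f : A) : A := S.de 0 (S.B1 n f)

/-- `B_n^{(ε)}` -/
def Bmode (n : ℤ) (ε : ℕ) (f : A) : A := if ε = 0 then S.B0 n f else S.B1 n f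

/-- the even type I* Bernstein operator in superspace
`C_n^{(0)} = ∑_{r≥0} (−1)^r h_{n+r} ∘ e_r^⊥` -/
def C0 (n : ℤ) (f : A) : A :=
  ∑ r ∈ Finset.range (S.bnd f), ((-1 : ℚ))^r • (S.hZ (n + (r : ℤ)) * S.ePerp r f)

/-- the odd type I* Bernstein operator in superspace `C_n^{(1)} = ∂_{ẽ₀}^⊥ ∘ C_n^{(0)}` -/
def C1 (n : ℤ) (f : A) : A := S.deperp 0 (S.C0 n f)

/-- `C_n^{(ε)}` -/
def Cmode (n : ℤ) (ε : ℕ) (f : A) : A := if ε = 0 then S.C0 n f else S.C1 n f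

/-- the type II Bernstein operators `B̄_n^{(ε)}`: the modes of
`B̄(z;η) = V₊(z) H(z;η) E^⊥(−z⁻¹) = ∑_{n,ε} z^n η^ε B̄_n^{(ε)}` -/
def Bbar (n : ℤ) (ε : ℕ) (f : A) : A :=
  ∑ r ∈ Finset.range (S.bnd f),
    ((-1 : ℚ))^r •
      ∑ s ∈ Finset.range ((n + (r : ℤ)).toNat + 1),
        S.Vp s
          ((if ε = 0 then S.hZ (n + (r : ℤ) - (s : ℤ)) else S.htZ (n + (r : ℤ) - (s : ℤ))) *
            S.ePerp r f)

/-- the modes `K_n^{(ε)}` of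
`K(z;η) = V₊(z)⁻¹ H(z) (∑_{r≥0} z^{−r} ∂_{θ_{r+1}}) exp(−η θ₁) E^⊥(−z⁻¹)
        = ∑_{n ∈ ℤ} z^n (η K_n^{(0)} + K_n^{(1)})` -/
def Kmode (n : ℤ) (ε : ℕ) (f : A) : A :=
  ∑ j ∈ Finset.range (S.bnd f),
    ((-1 : ℚ))^j •
      (let g : A := if ε = 0 then S.θ 1 * S.ePerp j f else S.ePerp j f
       ∑ r ∈ Finset.range (S.bnd g),
         ∑ u ∈ Finset.range ((n + (r : ℤ) + (j : ℤ)).toNat + 1),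
           S.VpInv u (S.hZ (n + (r : ℤ) + (j : ℤ) - (u : ℤ)) * S.Dθ (r+1) g))

end SSF

/-- `SSF` together with the truncation bounds for the (degree-lowering)
modes of `V₋(z)` and `V₋(z)⁻¹`. -/
structure SSFX (A : Type*) [Ring A] [Algebra ℚ A] extends SSF A where
  bnd_Vm : ∀ (f : A) (u : ℕ), toSSF.bnd f ≤ u → toSSF.Vm u f = 0
  bnd_VmInv : ∀ (f : A) (u : ℕ), toSSF.bnd f ≤ u → toSSF.VmInv u f = 0

namespace SSFX

variable {A : Type*} [Ring A] [Algebra ℚ A] (X : SSFX A)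

/-- the type II* Bernstein operators `C̄_n^{(ε)}`: the modes of
`C̄(z;η) = H(z) c̄(z;η) E^⊥(−z⁻¹) V₋(z) = ∑_{n,ε} z^n η^{1−ε} C̄_n^{(ε)}`,
where `c̄(z;η) = exp(η ∂_{θ₁}) ∑_{r≥0} z^r θ_{r+1}`. -/
def Cbar (n : ℤ) (ε : ℕ) (f : A) : A :=
  ∑ u ∈ Finset.range (X.toSSF.bnd f),
    ∑ j ∈ Finset.range (X.toSSF.bnd (X.toSSF.Vm u f)),
      ((-1 : ℚ))^j •
        ∑ r ∈ Finset.range ((n + (j : ℤ) + (u : ℤ)).toNat + 1),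
          X.toSSF.hZ (n + (j : ℤ) + (u : ℤ) - (r : ℤ)) *
            (if ε = 0
              then X.toSSF.Dθ 1 (X.toSSF.θ (r+1) * X.toSSF.ePerp j (X.toSSF.Vm u f))
              else X.toSSF.θ (r+1) * X.toSSF.ePerp j (X.toSSF.Vm u f))

/-- the modes `L_n^{(ε)}` of
`L(z;η) = H(z) E^⊥(−z⁻¹;η) V₋(z)⁻¹ = ∑_{n ∈ ℤ} z^n (L_n^{(0)} + η L_n^{(1)})` -/
def Lmode (n : ℤ) (ε : ℕ) (f : A) : A :=
  ∑ u ∈ Finset.range (X.toSSF.bnd f),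
    ∑ k ∈ Finset.range (X.toSSF.bnd (X.toSSF.VmInv u f)),
      (((-1 : ℚ))^k * (if ε = 0 then 1 else -1)) •
        (X.toSSF.hZ (n + (k : ℤ) + (u : ℤ)) *
          (if ε = 0 then X.toSSF.ePerp k (X.toSSF.VmInv u f)
           else X.toSSF.etPerp k (X.toSSF.VmInv u f)))

end SSFX

/-- The combinatorial conditions on the pair `(Λ, Ω)` appearing in the
Pieri rule for `e_r s*_Λ`:  `Ω*/Λ*` is a vertical `r`-strip, the fermionic
degrees agree, and the circles move according to the rules: a circle cannot
overpass another one (circles move only downwards, the `j`-th circle of `Λ`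
becoming the `j`-th circle of `Ω`); a circle cannot end up in a row with an
added box; a circle moves only when a (bosonic) box is added to its row, in
which case it is bumped (repeatedly) to the end of the first subsequent row
having no added box.  (In particular `Ω⊛/Λ⊛` is also a vertical strip.) -/
def SuperPartition.EPieriRule (r : ℕ) (Λ Ω : SuperPartition) : Prop :=
  Ω.fdeg = Λ.fdeg ∧
  (∀ i, Λ.starPart i ≤ Ω.starPart i ∧ Ω.starPart i ≤ Λ.starPart i + 1) ∧
  Ω.star.sum = Λ.star.sum + r ∧
  (∀ i, Λ.circPart i ≤ Ω.circPart i ∧ Ω.circPart i ≤ Λ.circPart i + 1) ∧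
  (∀ i, Ω.circPart i = Ω.starPart i + 1 → Ω.starPart i = Λ.starPart i) ∧
  (∀ j, j < Λ.fdeg → Λ.circleRows.getD j 0 ≤ Ω.circleRows.getD j 0) ∧
  (∀ j, j < Λ.fdeg →
    Ω.starPart (Λ.circleRows.getD j 0) = Λ.starPart (Λ.circleRows.getD j 0) →
    Ω.circleRows.getD j 0 = Λ.circleRows.getD j 0) ∧
  (∀ j, j < Λ.fdeg → ∀ i, Λ.circleRows.getD j 0 < i → i < Ω.circleRows.getD j 0 →
    Ω.starPart i = Λ.starPart i + 1)

namespace C1aux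

open Finset

/-- cancel a nonzero rational scalar -/
lemma smul_cancel {A : Type*} [AddCommGroup A] [Module ℚ A]
    (c : ℚ) (hc : c ≠ 0) {x y : A} (h : c • x = c • y) : x = y := by
  have := congrArg (fun z => c⁻¹ • z) h
  simpa [smul_smul, inv_mul_cancel₀ hc] using this

/-- triangle reindexing -/
lemma tri3 {M : Type*} [AddCommMonoid M] (H : ℕ → ℕ → M) :
    ∀ N : ℕ, ∑ s ∈ range N, ∑ j ∈ range (s+1), H j (s-j)
      = ∑ j ∈ range N, ∑ t ∈ range (N-j), H j t := by
  intro N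
  induction N with
  | zero => simp
  | succ N ih =>
    rw [Finset.sum_range_succ, ih,
      Finset.sum_range_succ (f := fun j => ∑ t ∈ range (N+1-j), H j t)]
    have h1 : ∀ j ∈ range N, ∑ t ∈ range (N+1-j), H j t
        = ∑ t ∈ range (N-j), H j t + H j (N-j) := by
      intro j hj
      rw [mem_range] at hj
      rw [show N+1-j = (N-j)+1 by omega, Finset.sum_range_succ]
    rw [Finset.sum_congr rfl h1, Finset.sum_add_distrib,
      show N+1-N = 1 by omega, Finset.sum_range_one,
      Finset.sum_range_succ (f := fun j => H j (N-j)), Nat.sub_self]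
    abel

lemma triangle {M : Type*} [AddCommMonoid M] (G : ℕ → ℕ → M) (N : ℕ) :
    ∑ k ∈ range N, ∑ t ∈ range (N-k), G k t
      = ∑ t ∈ range N, ∑ k ∈ range (N-t), G k t := by
  rw [← tri3 G N, ← tri3 (fun t k => G k t) N]
  refine Finset.sum_congr rfl fun s hs => ?_
  rw [← Finset.sum_range_reflect (fun j => G (s-j) j) (s+1)]
  refine Finset.sum_congr rfl fun j hj => ?_
  rw [mem_range] at hj
  congr 1 <;> omega

lemma tri_count {M : Type*} [AddCommMonoid M] (F : ℕ → M) (N : ℕ) :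
    ∑ k ∈ range N, ∑ t ∈ range (N-k), F (k+t) = ∑ u ∈ range N, (u+1) • F u := by
  rw [← tri3 (fun j t => F (j+t)) N]
  refine Finset.sum_congr rfl fun s hs => ?_
  have h1 : ∀ j ∈ range (s+1), F (j + (s-j)) = F s := by
    intro j hj; rw [mem_range] at hj; congr 1; omega
  rw [Finset.sum_congr rfl h1, Finset.sum_const, Finset.card_range]

/-- diagonal-reindexing triangle: terms `G (s-t) t` over `t ≤ s < N` -/
lemma tri_diag {M : Type*} [AddCommMonoid M] (G : ℕ → ℕ → M) (N : ℕ) :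
    ∑ s ∈ range N, ∑ t ∈ range (s+1), G (s-t) t
      = ∑ s ∈ range N, ∑ t ∈ range (N-s), G s t := by
  rw [← tri3 (fun s t => G s t) N]
  refine Finset.sum_congr rfl fun s hs => ?_
  rw [← Finset.sum_range_reflect (fun t => G (s-t) t) (s+1)]
  refine Finset.sum_congr rfl fun j hj => ?_
  rw [mem_range] at hj
  congr 1 <;> omega




section SSFlemmas

variable {A : Type*} [Ring A] [Algebra ℚ A] (S : SSF A)

lemma h_succ_eq (n : ℕ) : S.h (n+1) = ((n:ℚ)+1)⁻¹ •
    ∑ k ∈ Finset.range (n+1), ((k:ℚ)+1) • (S.x (k+1) * S.h (n-k)) := by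
  rw [← S.h_rec, smul_smul, inv_mul_cancel₀, one_smul]
  exact (by positivity : (0:ℚ) < (n:ℚ)+1).ne'

lemma h_comm (n : ℕ) : ∀ a : A, S.h n * a = a * S.h n := by
  induction n using Nat.strong_induction_on with
  | _ n ih =>
    intro a
    match n with
    | 0 => rw [S.h_zero, one_mul, mul_one]
    | Nat.succ m =>
      rw [h_succ_eq S m, smul_mul_assoc, mul_smul_comm, Finset.sum_mul, Finset.mul_sum]
      congr 1
      refine Finset.sum_congr rfl fun k hk => ?_
      rw [smul_mul_assoc, mul_smul_comm, mul_assoc, ih (m-k) (by omega) a,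
        ← mul_assoc, S.x_central, mul_assoc]

lemma hZ_comm (a : ℤ) (b : A) : S.hZ a * b = b * S.hZ a := by
  unfold SSF.hZ
  split
  · exact h_comm S _ b
  · rw [zero_mul, mul_zero]

lemma Dx_one (k : ℕ) : S.Dx k (1:A) = 0 := by
  have := S.Dx_leibniz k 1 1
  simp only [mul_one, one_mul] at this
  exact (left_eq_add.mp this)

lemma hZ_neg {a : ℤ} (h : a < 0) : S.hZ a = 0 := by
  unfold SSF.hZ; rw [if_neg (by omega)]

lemma hZ_ofNat (n : ℕ) : S.hZ (n:ℤ) = S.h n := by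
  unfold SSF.hZ; rw [if_pos (by omega), Int.toNat_natCast]

lemma Dx_h (n : ℕ) : ∀ k : ℕ, 1 ≤ k → S.Dx k (S.h n) = S.hZ ((n:ℤ) - k) := by
  induction n using Nat.strong_induction_on with
  | _ n ih =>
    intro k hk
    match n with
    | 0 =>
      rw [S.h_zero, Dx_one, hZ_neg S (by omega)]
    | Nat.succ m =>
      rw [h_succ_eq S m, map_smul, map_sum]
      have hterm : ∀ j ∈ Finset.range (m+1),
          S.Dx k (((j:ℚ)+1) • (S.x (j+1) * S.h (m-j)))
          = ((j:ℚ)+1) • ((if j+1 = k then (1:A) else 0) * S.h (m-j))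
            + ((j:ℚ)+1) • (S.x (j+1) * S.hZ (((m-j:ℕ):ℤ) - k)) := by
        intro j hj
        rw [map_smul, S.Dx_leibniz, S.Dx_x k (j+1) hk, ih (m-j) (by omega) k hk, smul_add]
      rw [Finset.sum_congr rfl hterm, Finset.sum_add_distrib]
      -- first sum
      have hS1 : ∑ j ∈ Finset.range (m+1),
          ((j:ℚ)+1) • ((if j+1 = k then (1:A) else 0) * S.h (m-j))
          = if k ≤ m+1 then (k:ℚ) • S.h (m+1-k) else 0 := by
        by_cases hkm : k ≤ m+1
        · rw [if_pos hkm]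
          rw [Finset.sum_eq_single_of_mem (k-1) (by rw [Finset.mem_range]; omega)]
          · rw [if_pos (by omega), one_mul, show m-(k-1) = m+1-k by omega,
              show ((k-1:ℕ):ℚ)+1 = (k:ℚ) by rw [Nat.cast_sub hk]; push_cast; ring]
          · intro j hj hne
            rw [if_neg (by omega), zero_mul, smul_zero]
        · rw [if_neg hkm]
          refine Finset.sum_eq_zero fun j hj => ?_
          rw [Finset.mem_range] at hj
          rw [if_neg (by omega), zero_mul, smul_zero]
      -- second sum
      have hS2 : ∑ j ∈ Finset.range (m+1),
          ((j:ℚ)+1) • (S.x (j+1) * S.hZ (((m-j:ℕ):ℤ) - k))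
          = if k ≤ m then (((m-k:ℕ):ℚ)+1) • S.h (m-k+1) else 0 := by
        by_cases hkm : k ≤ m
        · rw [if_pos hkm]
          have hsub : ∑ j ∈ Finset.range (m-k+1), ((j:ℚ)+1) • (S.x (j+1) * S.hZ (((m-j:ℕ):ℤ) - k))
              = ∑ j ∈ Finset.range (m+1), ((j:ℚ)+1) • (S.x (j+1) * S.hZ (((m-j:ℕ):ℤ) - k)) :=
            Finset.sum_subset (Finset.range_subset_range.mpr (by omega)) (fun j hj hnj => by
              rw [Finset.mem_range] at hj hnj
              rw [hZ_neg S (by omega), mul_zero, smul_zero])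
          rw [← hsub]
          have hconv : ∀ j ∈ Finset.range (m-k+1),
              ((j:ℚ)+1) • (S.x (j+1) * S.hZ (((m-j:ℕ):ℤ) - k))
              = ((j:ℚ)+1) • (S.x (j+1) * S.h (m-k-j)) := by
            intro j hj
            rw [Finset.mem_range] at hj
            rw [show (((m-j:ℕ):ℤ) - k) = (((m-k-j:ℕ)):ℤ) by omega, hZ_ofNat]
          rw [Finset.sum_congr rfl hconv]
          exact (S.h_rec (m-k)).symm
        · rw [if_neg hkm]
          refine Finset.sum_eq_zero fun j hj => ?_
          rw [Finset.mem_range] at hj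
          rw [hZ_neg S (by omega), mul_zero, smul_zero]
      rw [hS1, hS2]
      by_cases hkm : k ≤ m
      · rw [if_pos (by omega), if_pos hkm,
          show m-k+1 = m+1-k by omega, ← add_smul, smul_smul,
          show (((m:ℚ)+1)⁻¹ * ((k:ℚ) + (((m-k:ℕ):ℚ)+1))) = 1 by
            rw [Nat.cast_sub hkm]; field_simp; ring,
          one_smul, show ((m+1:ℕ):ℤ) - (k:ℤ) = ((m+1-k:ℕ):ℤ) by omega, hZ_ofNat]
      · by_cases hkm1 : k = m+1
        · subst hkm1
          rw [if_pos le_rfl, if_neg hkm, add_zero, smul_smul,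
            show (((m:ℚ)+1)⁻¹ * ((m+1:ℕ):ℚ)) = 1 by push_cast; field_simp,
            one_smul, Nat.sub_self,
            show ((m+1:ℕ):ℤ) - ((m+1:ℕ):ℤ) = ((0:ℕ):ℤ) by omega, hZ_ofNat]
        · rw [if_neg (by omega), if_neg hkm, add_zero, smul_zero,
            hZ_neg S (by omega)]

lemma Dx_hZ (a : ℤ) (k : ℕ) (hk : 1 ≤ k) : S.Dx k (S.hZ a) = S.hZ (a - k) := by
  by_cases ha : 0 ≤ a
  · have h1 : S.hZ a = S.h a.toNat := by unfold SSF.hZ; rw [if_pos ha]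
    rw [h1, Dx_h S _ k hk, Int.toNat_of_nonneg ha]
  · rw [hZ_neg S (by omega), map_zero, hZ_neg S (by omega)]

lemma hperp_sum (n : ℕ) (g : A) :
    ∑ k ∈ Finset.range (n+1), S.perp (S.h (n-k)) (S.Dx (k+1) g)
      = ((n:ℚ)+1) • S.perp (S.h (n+1)) g := by
  have hrec := congrArg S.perp (S.h_rec n)
  rw [map_smul, map_sum] at hrec
  have hterm : ∀ k ∈ Finset.range (n+1),
      S.perp (((k:ℚ)+1) • (S.x (k+1) * S.h (n-k)))
      = S.perp (S.h (n-k)) * S.Dx (k+1) := by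
    intro k hk
    rw [map_smul, S.perp_mul, S.perp_x (k+1) (by omega), mul_smul_comm, smul_smul,
      show ((k:ℚ)+1) * (((k+1:ℕ):ℚ))⁻¹ = 1 by push_cast; field_simp, one_smul]
  rw [Finset.sum_congr rfl hterm] at hrec
  have happ := congrArg (fun (T : Module.End ℚ A) => T g) hrec.symm
  simpa using happ

/-- the key Pieri-type commutation: `h_m^⊥ (h_a ⋅ g) = ∑_t h_{a-t} ⋅ h_{m-t}^⊥ g` -/
lemma key (m : ℕ) : ∀ (a : ℤ) (g : A),
    S.perp (S.h m) (S.hZ a * g)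
      = ∑ t ∈ Finset.range (m+1), S.hZ (a - t) * S.perp (S.h (m-t)) g := by
  induction m using Nat.strong_induction_on with
  | _ m ih =>
    intro a g
    match m with
    | 0 =>
      rw [S.h_zero, S.perp_one, Finset.sum_range_one]
      simp [S.h_zero, S.perp_one]
    | Nat.succ m =>
      refine smul_cancel ((m:ℚ)+1) (by positivity) ?_
      rw [← hperp_sum S m (S.hZ a * g)]
      have hder : ∀ k ∈ Finset.range (m+1),
          S.perp (S.h (m-k)) (S.Dx (k+1) (S.hZ a * g))
          = (∑ t ∈ Finset.range (m+1-k),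
              S.hZ (a - ((k+1:ℕ):ℤ) - t) * S.perp (S.h (m-k-t)) g)
            + ∑ t ∈ Finset.range (m+1-k),
              S.hZ (a - t) * S.perp (S.h (m-k-t)) (S.Dx (k+1) g) := by
        intro k hk
        rw [Finset.mem_range] at hk
        rw [S.Dx_leibniz, Dx_hZ S a (k+1) (by omega), map_add,
          ih (m-k) (by omega) (a - ((k+1:ℕ):ℤ)) g, ih (m-k) (by omega) a (S.Dx (k+1) g),
          show m-k+1 = m+1-k by omega]
      rw [Finset.sum_congr rfl hder, Finset.sum_add_distrib]
      have hT1 : ∑ k ∈ Finset.range (m+1), ∑ t ∈ Finset.range (m+1-k),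
            S.hZ (a - ((k+1:ℕ):ℤ) - t) * S.perp (S.h (m-k-t)) g
          = ∑ u ∈ Finset.range (m+1),
              ((u+1:ℕ):ℚ) • (S.hZ (a - ((u+1:ℕ):ℤ)) * S.perp (S.h (m+1-(u+1))) g) := by
        calc ∑ k ∈ Finset.range (m+1), ∑ t ∈ Finset.range (m+1-k),
              S.hZ (a - ((k+1:ℕ):ℤ) - t) * S.perp (S.h (m-k-t)) g
            = ∑ k ∈ Finset.range (m+1), ∑ t ∈ Finset.range (m+1-k),
              (fun u => S.hZ (a - ((u+1:ℕ):ℤ)) * S.perp (S.h (m+1-(u+1))) g) (k+t) := by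
              refine Finset.sum_congr rfl fun k hk => Finset.sum_congr rfl fun t ht => ?_
              rw [Finset.mem_range] at hk ht
              show S.hZ (a - ((k+1:ℕ):ℤ) - (t:ℤ)) * S.perp (S.h (m-k-t)) g
                = S.hZ (a - ((k+t+1:ℕ):ℤ)) * S.perp (S.h (m+1-(k+t+1))) g
              rw [show a - ((k+1:ℕ):ℤ) - (t:ℤ) = a - ((k+t+1:ℕ):ℤ) by push_cast; ring,
                show m-k-t = m+1-(k+t+1) by omega]
          _ = ∑ u ∈ Finset.range (m+1),
              (u+1) • (S.hZ (a - ((u+1:ℕ):ℤ)) * S.perp (S.h (m+1-(u+1))) g) :=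
              tri_count (fun u => S.hZ (a - ((u+1:ℕ):ℤ)) * S.perp (S.h (m+1-(u+1))) g) (m+1)
          _ = ∑ u ∈ Finset.range (m+1),
              ((u+1:ℕ):ℚ) • (S.hZ (a - ((u+1:ℕ):ℤ)) * S.perp (S.h (m+1-(u+1))) g) :=
              Finset.sum_congr rfl fun u hu => (Nat.cast_smul_eq_nsmul ℚ _ _).symm
      have hT2 : ∑ k ∈ Finset.range (m+1), ∑ t ∈ Finset.range (m+1-k),
            S.hZ (a - t) * S.perp (S.h (m-k-t)) (S.Dx (k+1) g)
          = ∑ t ∈ Finset.range (m+1),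
              ((m+1-t:ℕ):ℚ) • (S.hZ (a - (t:ℕ)) * S.perp (S.h (m+1-t)) g) := by
        rw [triangle (fun k t => S.hZ (a - t) * S.perp (S.h (m-k-t)) (S.Dx (k+1) g)) (m+1)]
        refine Finset.sum_congr rfl fun t ht => ?_
        rw [Finset.mem_range] at ht
        rw [← Finset.mul_sum]
        have h1 : ∀ k ∈ Finset.range (m+1-t),
            S.perp (S.h (m-k-t)) (S.Dx (k+1) g) = S.perp (S.h (m-t-k)) (S.Dx (k+1) g) := by
          intro k hk; rw [show m-k-t = m-t-k by omega]
        rw [Finset.sum_congr rfl h1, show m+1-t = (m-t)+1 by omega, hperp_sum S (m-t) g,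
          mul_smul_comm]
        congr 1
        push_cast
        ring
      rw [hT1, hT2]
      have e1 : (∑ u ∈ Finset.range (m+1),
            ((u+1:ℕ):ℚ) • (S.hZ (a - ((u+1:ℕ):ℤ)) * S.perp (S.h (m+1-(u+1))) g))
          = ∑ t ∈ Finset.range (m+1+1),
            (t:ℚ) • (S.hZ (a - (t:ℕ)) * S.perp (S.h (m+1-t)) g) := by
        rw [Finset.sum_range_succ'
          (fun t => (t:ℚ) • (S.hZ (a - (t:ℕ)) * S.perp (S.h (m+1-t)) g)) (m+1)]
        simp
      have e2 : (∑ t ∈ Finset.range (m+1),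
            ((m+1-t:ℕ):ℚ) • (S.hZ (a - (t:ℕ)) * S.perp (S.h (m+1-t)) g))
          = ∑ t ∈ Finset.range (m+1+1),
            ((m+1-t:ℕ):ℚ) • (S.hZ (a - (t:ℕ)) * S.perp (S.h (m+1-t)) g) := by
        rw [Finset.sum_range_succ (n := m+1)]
        simp
      rw [e1, e2, ← Finset.sum_add_distrib, Finset.smul_sum]
      refine Finset.sum_congr rfl fun t ht => ?_
      rw [Finset.mem_range] at ht
      rw [← add_smul]
      congr 1
      rw [Nat.cast_sub (show t ≤ m+1 by omega)]
      push_cast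
      ring

end SSFlemmas
end C1aux

/-- For every `n ∈ ℤ`, the odd type-I* Bernstein operator
satisfies `C_n^{(1)} = ∂_{ẽ₀}^⊥ ∘ C_n^{(0)}
= ∑_{r,s,t≥0} (−1)^r h_{n+r−t} ∘ θ_{s+t+1} ∘ h_s^⊥ ∘ e_r^⊥`
(with `h_j = 0` for `j < 0`; all sums are locally finite and rendered with
the truncation bound `bnd`). -/
theorem C1_explicit {A : Type*} [Ring A] [Algebra ℚ A]
    (S : SSF A) (n : ℤ) (f : A) :
    S.C1 n f = S.deperp 0 (S.C0 n f)
    ∧ S.C1 n f =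
        ∑ r ∈ Finset.range (S.bnd f),
          ((-1 : ℚ))^r •
            ∑ s ∈ Finset.range (S.bnd (S.ePerp r f)),
              ∑ t ∈ Finset.range ((n + (r : ℤ)).toNat + 1),
                S.hZ (n + (r : ℤ) - (t : ℤ)) *
                  (S.θ (s + t + 1) * S.hPerp s (S.ePerp r f)) := by
  constructor
  · rfl
  · simp only [SSF.hPerp]
    set B := (Finset.range (S.bnd f)).sup
      (fun r => S.bnd (S.ePerp r f) + ((n + (r:ℤ)).toNat + 1)) with hB
    set M := max (S.bnd (S.C0 n f)) B with hM
    have hBle : ∀ r ∈ Finset.range (S.bnd f),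
        S.bnd (S.ePerp r f) + ((n + (r:ℤ)).toNat + 1) ≤ M := fun r hr =>
      le_trans (Finset.le_sup (f := fun r => S.bnd (S.ePerp r f) + ((n + (r:ℤ)).toNat + 1)) hr)
        (le_max_right _ _)
    have step1 : S.C1 n f
        = ∑ s ∈ Finset.range M, S.θ (s+1) * S.perp (S.h s) (S.C0 n f) := by
      show S.deperp 0 (S.C0 n f) = _
      unfold SSF.deperp
      rw [pow_zero, one_smul]
      simp only [zero_add]
      refine Finset.sum_subset (Finset.range_subset_range.mpr (le_max_left _ _)) ?_
      intro s hs hns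
      rw [Finset.mem_range, not_lt] at hns
      rw [S.bnd_hperp (S.C0 n f) s hns, mul_zero]
    have step2 : ∀ s, S.perp (S.h s) (S.C0 n f)
        = ∑ r ∈ Finset.range (S.bnd f), ((-1:ℚ))^r •
            ∑ t ∈ Finset.range (s+1),
              S.hZ (n + (r:ℤ) - (t:ℕ)) * S.perp (S.h (s-t)) (S.ePerp r f) := by
      intro s
      show S.perp (S.h s) (S.C0 n f) = _
      unfold SSF.C0
      rw [map_sum]
      exact Finset.sum_congr rfl fun r hr => by
        rw [map_smul, C1aux.key S s (n + (r:ℤ)) (S.ePerp r f)]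
    rw [step1]
    have step3 : ∑ s ∈ Finset.range M, S.θ (s+1) * S.perp (S.h s) (S.C0 n f)
        = ∑ r ∈ Finset.range (S.bnd f), ((-1:ℚ))^r •
            ∑ s ∈ Finset.range M, ∑ t ∈ Finset.range (s+1),
              S.θ (s+1) * (S.hZ (n + (r:ℤ) - (t:ℕ)) * S.perp (S.h (s-t)) (S.ePerp r f)) := by
      calc ∑ s ∈ Finset.range M, S.θ (s+1) * S.perp (S.h s) (S.C0 n f)
          = ∑ s ∈ Finset.range M, ∑ r ∈ Finset.range (S.bnd f), ((-1:ℚ))^r •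
              ∑ t ∈ Finset.range (s+1),
                S.θ (s+1) * (S.hZ (n + (r:ℤ) - (t:ℕ)) * S.perp (S.h (s-t)) (S.ePerp r f)) := by
            refine Finset.sum_congr rfl fun s _ => ?_
            rw [step2 s, Finset.mul_sum]
            refine Finset.sum_congr rfl fun r _ => ?_
            rw [mul_smul_comm, Finset.mul_sum]
        _ = ∑ r ∈ Finset.range (S.bnd f), ∑ s ∈ Finset.range M, ((-1:ℚ))^r •
              ∑ t ∈ Finset.range (s+1),
                S.θ (s+1) * (S.hZ (n + (r:ℤ) - (t:ℕ)) * S.perp (S.h (s-t)) (S.ePerp r f)) :=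
            Finset.sum_comm
        _ = _ := Finset.sum_congr rfl fun r _ => (Finset.smul_sum).symm
    rw [step3]
    refine Finset.sum_congr rfl fun r hr => ?_
    congr 1
    have hwM : S.bnd (S.ePerp r f) ≤ M := le_trans (by omega) (hBle r hr)
    calc ∑ s ∈ Finset.range M, ∑ t ∈ Finset.range (s+1),
            S.θ (s+1) * (S.hZ (n + (r:ℤ) - (t:ℕ)) * S.perp (S.h (s-t)) (S.ePerp r f))
        = ∑ s ∈ Finset.range M, ∑ t ∈ Finset.range (s+1),
            (fun s' t => S.hZ (n + (r:ℤ) - (t:ℕ)) *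
              (S.θ (s'+t+1) * S.perp (S.h s') (S.ePerp r f))) (s-t) t := by
          refine Finset.sum_congr rfl fun s _ => Finset.sum_congr rfl fun t ht => ?_
          rw [Finset.mem_range] at ht
          show S.θ (s+1) * (S.hZ (n + (r:ℤ) - (t:ℕ)) * S.perp (S.h (s-t)) (S.ePerp r f))
            = S.hZ (n + (r:ℤ) - (t:ℕ)) * (S.θ ((s-t)+t+1) * S.perp (S.h (s-t)) (S.ePerp r f))
          rw [show (s-t)+t+1 = s+1 by omega, ← mul_assoc, ← C1aux.hZ_comm S, mul_assoc]
      _ = ∑ s ∈ Finset.range M, ∑ t ∈ Finset.range (M-s),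
            S.hZ (n + (r:ℤ) - (t:ℕ)) * (S.θ (s+t+1) * S.perp (S.h s) (S.ePerp r f)) :=
          C1aux.tri_diag (fun s' t => S.hZ (n + (r:ℤ) - (t:ℕ)) *
            (S.θ (s'+t+1) * S.perp (S.h s') (S.ePerp r f))) M
      _ = ∑ s ∈ Finset.range (S.bnd (S.ePerp r f)), ∑ t ∈ Finset.range (M-s),
            S.hZ (n + (r:ℤ) - (t:ℕ)) * (S.θ (s+t+1) * S.perp (S.h s) (S.ePerp r f)) := by
          refine (Finset.sum_subset (Finset.range_subset_range.mpr hwM) ?_).symm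
          intro s hs hns
          rw [Finset.mem_range, not_lt] at hns
          refine Finset.sum_eq_zero fun t ht => ?_
          rw [S.bnd_hperp (S.ePerp r f) s hns, mul_zero, mul_zero]
      _ = ∑ s ∈ Finset.range (S.bnd (S.ePerp r f)),
            ∑ t ∈ Finset.range ((n + (r:ℤ)).toNat + 1),
            S.hZ (n + (r:ℤ) - (t:ℕ)) * (S.θ (s+t+1) * S.perp (S.h s) (S.ePerp r f)) := by
          refine Finset.sum_congr rfl fun s hs => ?_
          rw [Finset.mem_range] at hs
          have hsub : (n + (r:ℤ)).toNat + 1 ≤ M - s := by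
            have := hBle r hr; omega
          refine (Finset.sum_subset (Finset.range_subset_range.mpr hsub) ?_).symm
          intro t ht hnt
          rw [Finset.mem_range, not_lt] at hnt
          have hneg : n + (r:ℤ) - (t:ℕ) < 0 := by
            have h1 : n + (r:ℤ) ≤ ((n + (r:ℤ)).toNat : ℤ) := Int.self_le_toNat _
            omega
          rw [C1aux.hZ_neg S hneg, zero_mul]
end
end

section
/- For every n ≥ 1, the following operator identity holds on the ring of symmetric functions in superspace: ρ ∘ ∂_{xₙ} ∘ ρ = (−1)^{n−1} ( ∂_{xₙ} + β_{−n} ), where β_{−n} = Σ_{r>0} θ_r ∂_{θ_{r+n}}. -/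
/-!
Common setup: the ring of symmetric functions in superspace
`𝒜 = ℚ[x₁,x₂,…] ⊗ ⋀[θ₁,θ₂,…]`, axiomatised as a structure `SSF` on a
ℚ-algebra `A`, together with superpartitions and the various derived
operators (Bernstein operators in superspace of the four types, etc.).

Conventions:
* `x k`, `θ k` are the (normalized) power sums; they are meaningful for
  `k ≥ 1` and we set `x 0 = θ 0 = 0`.
* All "locally finite" infinite sums of operators `∑_{r ≥ 0}` are rendered
  as finite sums `∑ r ∈ Finset.range (bnd f)` where `bnd f` is a bound
  beyond which all relevant operators annihilate `f`.
-/

open scoped BigOperators Classical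

noncomputable section

section ProofAux

variable {A : Type*} [Ring A] [Algebra ℚ A] (S : SSF A)

lemma aux_Dx_one (k : ℕ) : S.Dx k (1 : A) = 0 := by
  have h := S.Dx_leibniz k 1 1
  rw [mul_one, one_mul, mul_one] at h
  have h2 : S.Dx k (1 : A) + 0 = S.Dx k 1 + S.Dx k 1 := by rw [add_zero]; exact h
  exact (add_left_cancel h2).symm

lemma aux_Dθ_one (k : ℕ) : S.Dθ k (1 : A) = 0 := by
  have h := S.Dθ_leibniz k 1 1
  simp only [mul_one, one_mul, map_one] at h
  have h2 : S.Dθ k (1 : A) + 0 = S.Dθ k 1 + S.Dθ k 1 := by rw [add_zero]; exact h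
  exact (add_left_cancel h2).symm

lemma aux_induction (P : A → Prop) (h0 : P 0) (h1 : P 1)
    (hx : ∀ k : ℕ, P (S.x (k+1))) (hθ : ∀ k : ℕ, P (S.θ (k+1)))
    (hmul : ∀ a b, P a → P b → P (a*b))
    (hadd : ∀ a b, P a → P b → P (a+b))
    (hsmul : ∀ (c : ℚ) (a : A), P a → P (c • a)) (a : A) : P a := by
  have hlist : ∀ L : List A, (∀ b ∈ L, P b) → P L.prod := by
    intro L
    induction L with
    | nil => intro _; simpa using h1
    | cons c t ih =>
        intro hb
        rw [List.prod_cons]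
        exact hmul _ _ (hb c List.mem_cons_self)
          (ih fun b hbt => hb b (List.mem_cons_of_mem _ hbt))
  have hpow : ∀ (k m : ℕ), P (S.x (k+1) ^ m) := by
    intro k m
    induction m with
    | zero => simpa using h1
    | succ m ih => rw [pow_succ]; exact hmul _ _ ih (hx k)
  have hmem : a ∈ Submodule.span ℚ (Set.range S.bas) := by
    rw [S.bas.span_eq]; exact Submodule.mem_top
  refine Submodule.span_induction (p := fun x _ => P x) ?_ h0
    (fun x y _ _ hx' hy' => hadd x y hx' hy') (fun c x _ hx' => hsmul c x hx') hmem
  rintro x ⟨⟨d, T⟩, rfl⟩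
  rw [S.bas_eq]
  refine hmul _ _ (hlist _ ?_) (hlist _ ?_)
  · intro b hb
    obtain ⟨k, _, rfl⟩ := List.mem_map.1 hb
    exact hpow k (d k)
  · intro b hb
    obtain ⟨k, _, rfl⟩ := List.mem_map.1 hb
    exact hθ k

lemma aux_theta_sigma (k : ℕ) (a : A) : S.θ k * S.σ a = a * S.θ k := by
  refine aux_induction S (fun a => S.θ k * S.σ a = a * S.θ k) ?_ ?_ ?_ ?_ ?_ ?_ ?_ a
  · simp
  · simp
  · intro j; rw [S.σ_x]; exact (S.x_central (j+1) (S.θ k)).symm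
  · intro j; rw [S.σ_θ, mul_neg, S.θ_anticomm (j+1) k]
  · intro a b ha hb
    rw [map_mul, ← mul_assoc, ha, mul_assoc, hb, mul_assoc]
  · intro a b ha hb
    rw [map_add, mul_add, ha, hb, add_mul]
  · intro c a ha
    rw [map_smul, mul_smul_comm, ha, smul_mul_assoc]

lemma aux_βm_ext (n : ℕ) (f : A) (M : ℕ) (h : S.bnd f ≤ M) :
    S.βm n f = ∑ r ∈ Finset.range M, S.θ (r+1) * S.Dθ (r+1+n) f := by
  unfold SSF.βm
  refine Finset.sum_subset (Finset.range_subset_range.2 h) fun r hr hr' => ?_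
  rw [S.bnd_Dθ f (r+1+n) (by simp at hr'; omega), mul_zero]

lemma aux_βm_zero (n : ℕ) : S.βm n (0 : A) = 0 := by
  unfold SSF.βm
  simp

lemma aux_βm_one (n : ℕ) : S.βm n (1 : A) = 0 := by
  unfold SSF.βm
  simp [aux_Dθ_one]

lemma aux_βm_x (n k : ℕ) : S.βm n (S.x k) = 0 := by
  unfold SSF.βm
  simp [S.Dθ_x]

lemma aux_βm_add (n : ℕ) (a b : A) : S.βm n (a + b) = S.βm n a + S.βm n b := by
  rw [aux_βm_ext S n (a+b) (max (S.bnd (a+b)) (max (S.bnd a) (S.bnd b))) (le_max_left _ _),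
      aux_βm_ext S n a (max (S.bnd (a+b)) (max (S.bnd a) (S.bnd b)))
        (le_trans (le_max_left _ _) (le_max_right _ _)),
      aux_βm_ext S n b (max (S.bnd (a+b)) (max (S.bnd a) (S.bnd b)))
        (le_trans (le_max_right _ _) (le_max_right _ _)),
      ← Finset.sum_add_distrib]
  exact Finset.sum_congr rfl fun r _ => by rw [map_add, mul_add]

lemma aux_βm_smul (n : ℕ) (c : ℚ) (a : A) : S.βm n (c • a) = c • S.βm n a := by
  rw [aux_βm_ext S n (c • a) (max (S.bnd (c • a)) (S.bnd a)) (le_max_left _ _),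
      aux_βm_ext S n a (max (S.bnd (c • a)) (S.bnd a)) (le_max_right _ _),
      Finset.smul_sum]
  exact Finset.sum_congr rfl fun r _ => by rw [map_smul, mul_smul_comm]

lemma aux_βm_mul (n : ℕ) (a b : A) :
    S.βm n (a * b) = S.βm n a * b + a * S.βm n b := by
  rw [aux_βm_ext S n (a*b) (max (S.bnd (a*b)) (max (S.bnd a) (S.bnd b))) (le_max_left _ _),
      aux_βm_ext S n a (max (S.bnd (a*b)) (max (S.bnd a) (S.bnd b)))
        (le_trans (le_max_left _ _) (le_max_right _ _)),
      aux_βm_ext S n b (max (S.bnd (a*b)) (max (S.bnd a) (S.bnd b)))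
        (le_trans (le_max_right _ _) (le_max_right _ _)),
      Finset.sum_mul, Finset.mul_sum, ← Finset.sum_add_distrib]
  refine Finset.sum_congr rfl fun r _ => ?_
  rw [S.Dθ_leibniz, mul_add, ← mul_assoc (S.θ (r+1)) (S.Dθ (r+1+n) a) b,
      ← mul_assoc (S.θ (r+1)) (S.σ a) (S.Dθ (r+1+n) b), aux_theta_sigma S (r+1) a,
      mul_assoc a (S.θ (r+1)) (S.Dθ (r+1+n) b)]

lemma aux_Dx_e (n : ℕ) (hn : 1 ≤ n) (p : ℕ) :
    S.Dx n (S.e p) = if n ≤ p then ((-1:ℚ))^(n-1) • S.e (p-n) else 0 := by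
  induction p using Nat.strong_induction_on with
  | _ p IH =>
    match p with
    | 0 => rw [S.e_zero, aux_Dx_one, if_neg (by omega)]
    | Nat.succ p =>
      have hne : ((p:ℚ)+1) ≠ 0 := by positivity
      have key : ((p:ℚ)+1) • S.Dx n (S.e (p+1)) =
          ∑ k ∈ Finset.range (p+1),
            ((-1:ℚ)^k * ((k:ℚ)+1)) • S.Dx n (S.x (k+1) * S.e (p-k)) := by
        rw [← map_smul, S.e_rec p, map_sum]
        exact Finset.sum_congr rfl fun k _ => map_smul _ _ _
      have key2 : ∀ k ∈ Finset.range (p+1),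
          ((-1:ℚ)^k * ((k:ℚ)+1)) • S.Dx n (S.x (k+1) * S.e (p-k)) =
          (if k+1 = n then ((-1:ℚ)^k * ((k:ℚ)+1)) • S.e (p-k) else 0)
          + (if n + k ≤ p then
              ((-1:ℚ)^k * ((k:ℚ)+1)) • (((-1:ℚ))^(n-1) • (S.x (k+1) * S.e (p-n-k))) else 0) := by
        intro k hk
        have hkp : k ≤ p := by simp at hk; omega
        rw [S.Dx_leibniz, S.Dx_x n (k+1) hn, IH (p-k) (by omega), smul_add]
        congr 1
        · by_cases h : k+1 = n
          · rw [if_pos h, if_pos h, one_mul]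
          · rw [if_neg h, if_neg h, zero_mul, smul_zero]
        · by_cases h : n + k ≤ p
          · rw [if_pos (show n ≤ p - k by omega), if_pos h, mul_smul_comm,
                Nat.sub_right_comm]
          · rw [if_neg (show ¬ n ≤ p - k by omega), if_neg h, mul_zero, smul_zero]
      have hA : (∑ k ∈ Finset.range (p+1),
          if k+1 = n then ((-1:ℚ)^k * ((k:ℚ)+1)) • S.e (p-k) else 0)
          = if n ≤ p+1 then ((-1:ℚ)^(n-1) * (n:ℚ)) • S.e (p+1-n) else 0 := by
        by_cases h : n ≤ p+1
        · rw [if_pos h]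
          have hcond : ∀ k, k ∈ Finset.range (p+1) →
              (if k+1 = n then ((-1:ℚ)^k * ((k:ℚ)+1)) • S.e (p-k) else 0)
              = (if k = n-1 then ((-1:ℚ)^k * ((k:ℚ)+1)) • S.e (p-k) else 0) := by
            intro k _
            by_cases h' : k + 1 = n
            · rw [if_pos h', if_pos (by omega)]
            · rw [if_neg h', if_neg (by omega)]
          rw [Finset.sum_congr rfl hcond, Finset.sum_ite_eq' (Finset.range (p+1)) (n-1)
            (fun k => ((-1:ℚ)^k * ((k:ℚ)+1)) • S.e (p-k)),
            if_pos (Finset.mem_range.2 (by omega))]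
          have e1 : p - (n-1) = p+1-n := by omega
          have e2 : ((-1:ℚ)^(n-1) * (((n-1:ℕ):ℚ)+1)) = ((-1:ℚ)^(n-1) * (n:ℚ)) := by
            rw [Nat.cast_sub hn]; ring
          rw [e1, e2]
        · rw [if_neg h]
          refine Finset.sum_eq_zero fun k hk => ?_
          rw [if_neg (by simp at hk; omega)]
      have hB : (∑ k ∈ Finset.range (p+1),
          if n + k ≤ p then
            ((-1:ℚ)^k * ((k:ℚ)+1)) • (((-1:ℚ))^(n-1) • (S.x (k+1) * S.e (p-n-k))) else 0)
          = if n ≤ p then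
              ((-1:ℚ))^(n-1) • ((((p-n:ℕ):ℚ)+1) • S.e (p-n+1)) else 0 := by
        by_cases h : n ≤ p
        · rw [if_pos h]
          have hq : p - n + 1 ≤ p + 1 := by omega
          rw [← Finset.sum_subset (Finset.range_subset_range.2 hq)
            (fun k hk hk' => by rw [if_neg (by simp at hk hk'; omega)])]
          rw [S.e_rec (p-n), Finset.smul_sum]
          refine Finset.sum_congr rfl fun k hk => ?_
          have hk' : k ≤ p - n := by simp at hk; omega
          rw [if_pos (by omega), smul_comm]
        · rw [if_neg h]
          refine Finset.sum_eq_zero fun k hk => ?_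
          rw [if_neg (by omega)]
      have main : ((p:ℚ)+1) • S.Dx n (S.e (p+1)) =
          ((p:ℚ)+1) • (if n ≤ p+1 then ((-1:ℚ))^(n-1) • S.e (p+1-n) else 0) := by
        rw [key, Finset.sum_congr rfl key2, Finset.sum_add_distrib, hA, hB]
        by_cases h1 : n ≤ p
        · rw [if_pos (show n ≤ p+1 by omega), if_pos h1, if_pos (show n ≤ p+1 by omega)]
          have e1 : p - n + 1 = p + 1 - n := by omega
          rw [e1, smul_smul, smul_smul, ← add_smul]
          congr 1
          have e2 : ((p-n:ℕ):ℚ) = (p:ℚ) - (n:ℚ) := by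
            rw [Nat.cast_sub h1]
          rw [e2]; ring
        · by_cases h2 : n ≤ p + 1
          · rw [if_pos h2, if_neg h1, if_pos h2, add_zero, smul_smul]
            congr 1
            have hnp : (n:ℚ) = (p:ℚ) + 1 := by
              have : n = p + 1 := by omega
              exact_mod_cast congrArg (Nat.cast : ℕ → ℚ) this
            rw [hnp]; ring
          · rw [if_neg h2, if_neg h1, if_neg h2, add_zero, smul_zero]
      have := congrArg (fun z => ((p:ℚ)+1)⁻¹ • z) main
      simpa [smul_smul, ← mul_assoc, inv_mul_cancel₀ hne] using this

lemma aux_Dx_et (n : ℕ) (hn : 1 ≤ n) (q : ℕ) :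
    S.Dx n (S.et q) = if n ≤ q then ((-1:ℚ))^(n-1) • S.et (q-n) else 0 := by
  rw [S.et_eq q, map_sum]
  have step : ∀ j ∈ Finset.range (q+1),
      S.Dx n (((-1:ℚ))^j • (S.θ (j+1) * S.e (q-j))) =
      if n + j ≤ q then
        ((-1:ℚ))^(n-1) • (((-1:ℚ))^j • (S.θ (j+1) * S.e (q-n-j))) else 0 := by
    intro j hj
    have hjq : j ≤ q := by simp at hj; omega
    rw [map_smul, S.Dx_leibniz, S.Dx_θ, zero_mul, zero_add, aux_Dx_e S n hn (q-j)]
    by_cases h : n + j ≤ q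
    · rw [if_pos (show n ≤ q - j by omega), if_pos h, mul_smul_comm, smul_comm,
          Nat.sub_right_comm]
    · rw [if_neg (show ¬ n ≤ q - j by omega), if_neg h, mul_zero, smul_zero]
  rw [Finset.sum_congr rfl step]
  by_cases h : n ≤ q
  · rw [if_pos h]
    have hq : q - n + 1 ≤ q + 1 := by omega
    rw [← Finset.sum_subset (Finset.range_subset_range.2 hq)
      (fun j hj hj' => by rw [if_neg (by simp at hj hj'; omega)])]
    rw [S.et_eq (q-n), Finset.smul_sum]
    refine Finset.sum_congr rfl fun j hj => ?_
    rw [if_pos (by simp at hj; omega)]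
  · rw [if_neg h]
    exact Finset.sum_eq_zero fun j hj => by rw [if_neg (by omega)]

lemma aux_ρ_et (q : ℕ) : S.ρ (S.et q) = S.θ (q+1) := by
  have h := S.ρ_θ (q+1) (by omega)
  rw [Nat.add_sub_cancel] at h
  rw [← h, S.ρ_invol]

lemma aux_βm_θ [Nontrivial A] (n m : ℕ) (hn : 1 ≤ n) (hm : 1 ≤ m) :
    S.βm n (S.θ m) = if n < m then S.θ (m-n) else 0 := by
  have hbnd : m < S.bnd (S.θ m) := by
    by_contra h
    have h2 := S.bnd_Dθ (S.θ m) m (by omega)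
    rw [S.Dθ_θ m m hm, if_pos rfl] at h2
    exact one_ne_zero h2
  unfold SSF.βm
  have step : ∀ r ∈ Finset.range (S.bnd (S.θ m)),
      S.θ (r+1) * S.Dθ (r+1+n) (S.θ m)
      = if r = m - n - 1 ∧ n < m then S.θ (r+1) else 0 := by
    intro r _
    rw [S.Dθ_θ (r+1+n) m (by omega)]
    by_cases h : m = r+1+n
    · rw [if_pos h, mul_one, if_pos ⟨by omega, by omega⟩]
    · rw [if_neg h, mul_zero, if_neg (fun hc => h (by obtain ⟨h1, h2⟩ := hc; omega))]
  rw [Finset.sum_congr rfl step]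
  by_cases h : n < m
  · rw [if_pos h]
    have hiff : ∀ r, (if r = m-n-1 ∧ n < m then S.θ (r+1) else 0)
        = (if r = m-n-1 then S.θ (r+1) else 0) := by
      intro r
      by_cases h' : r = m-n-1
      · rw [if_pos ⟨h', h⟩, if_pos h']
      · rw [if_neg (fun hc => h' hc.1), if_neg h']
    rw [Finset.sum_congr rfl (fun r _ => hiff r),
        Finset.sum_ite_eq' (Finset.range (S.bnd (S.θ m))) (m-n-1) (fun r => S.θ (r+1)),
        if_pos (Finset.mem_range.2 (by omega))]
    congr 1
    omega
  · rw [if_neg h]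
    exact Finset.sum_eq_zero fun r _ => by rw [if_neg (fun hc => h hc.2)]

end ProofAux

/-- For every `n ≥ 1`,
`ρ ∘ ∂_{x_n} ∘ ρ = (−1)^{n−1} (∂_{x_n} + β_{−n})`, where
`β_{−n} = ∑_{r>0} θ_r ∂_{θ_{r+n}}`. -/
theorem rho_conj_Dx {A : Type*} [Ring A] [Algebra ℚ A]
    (S : SSF A) (n : ℕ) (hn : 1 ≤ n) (f : A) :
    S.ρ (S.Dx n (S.ρ f)) = ((-1 : ℚ))^(n-1) • (S.Dx n f + S.βm n f) := by
  rcases subsingleton_or_nontrivial A with hA | hA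
  · exact Subsingleton.elim _ _
  refine aux_induction S
    (fun f => S.ρ (S.Dx n (S.ρ f)) = ((-1:ℚ))^(n-1) • (S.Dx n f + S.βm n f)) ?_ ?_ ?_ ?_ ?_ ?_ ?_ f
  · simp [aux_βm_zero]
  · show S.ρ (S.Dx n (S.ρ (1:A))) = ((-1:ℚ))^(n-1) • (S.Dx n (1:A) + S.βm n (1:A))
    simp [aux_Dx_one, aux_βm_one]
  · intro k
    rw [S.ρ_x (k+1) (by omega), map_smul, S.Dx_x n (k+1) hn, aux_βm_x, add_zero,
        Nat.add_sub_cancel]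
    by_cases hkn : k + 1 = n
    · rw [if_pos hkn, map_smul, map_one, show n - 1 = k from by omega]
    · rw [if_neg hkn]
      simp
  · intro k
    rw [S.ρ_θ (k+1) (by omega), Nat.add_sub_cancel, aux_Dx_et S n hn k,
        S.Dx_θ, aux_βm_θ S n (k+1) hn (by omega), zero_add]
    by_cases hnk : n ≤ k
    · rw [if_pos hnk, map_smul, aux_ρ_et, if_pos (by omega)]
      have : k - n + 1 = k + 1 - n := by omega
      rw [this]
    · rw [if_neg hnk, map_zero, if_neg (by omega), smul_zero]
  · intro a b ha hb
    rw [map_mul, S.Dx_leibniz, map_add, map_mul, map_mul, S.ρ_invol, S.ρ_invol, ha, hb,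
        S.Dx_leibniz, aux_βm_mul, smul_mul_assoc, mul_smul_comm, ← smul_add]
    congr 1
    rw [add_mul, mul_add]
    abel
  · intro a b ha hb
    rw [map_add, map_add, map_add, ha, hb, map_add, aux_βm_add, ← smul_add]
    congr 1
    abel
  · intro c a ha
    rw [map_smul, map_smul, map_smul, ha, map_smul, aux_βm_smul, ← smul_add, smul_comm]
end
end
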